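/- arXiv:0807.3602 — 2 statements merged into one kernel-verified Lean document; each statement's English description precedes it below -/
import Mathlib

section
/- If p is a positively folded alcove walk and the raising root operator ẽ_i applied to p is nonzero, then ẽ_i(p) is again positively folded and dim(ẽ_i(p)) = dim(p) + 1. Moreover end(ẽ_i(p)) equals t_{α_i^∨}·end(p), end(p), or s_γ·end(p) according to whether the operator acts by case (a), (b), or (c) of its definition. -/
open scoped RealInnerProductSpace BigOperators

attribute [local instance] Classical.propDecidable

noncomputable section

variable {V : Type*} [NormedAddCommGroup V] [InnerProductSpace ℝ V]

/-- The coroot `α^∨ = 2α/⟨α,α⟩` of a root `α`. -/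
def coroot' (α : V) : V := (2 / ⟪α, α⟫) • α

/-- The reflection `s_α` in the linear hyperplane orthogonal to `α`. -/
def sref (α : V) : V → V := fun x => x - ⟪x, α⟫ • coroot' α

/-- Data of a reduced irreducible crystallographic root system `R` (recorded via its
positive system `Rpos` and simple roots `simple`) in a real inner product space. -/
structure RSData (V : Type*) [NormedAddCommGroup V] [InnerProductSpace ℝ V] (n : ℕ) where
  Rpos : Finset V
  simple : Fin n → V
  hsimple : ∀ i, simple i ∈ Rpos
  hnz : ∀ α ∈ Rpos, α ≠ 0
  hdisj : ∀ α ∈ Rpos, -α ∉ Rpos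
  hind : LinearIndependent ℝ simple
  hspan : Submodule.span ℝ (Set.range simple) = ⊤
  hposcomb : ∀ β ∈ Rpos, ∃ c : Fin n → ℕ, β = ∑ i, (c i : ℝ) • simple i
  hrefl : ∀ α ∈ Rpos, ∀ β ∈ Rpos, sref α β ∈ Rpos ∨ -(sref α β) ∈ Rpos
  hcrys : ∀ α ∈ Rpos, ∀ β ∈ Rpos, ∃ z : ℤ, ⟪β, coroot' α⟫ = (z : ℝ)
  hred : ∀ α ∈ Rpos, ∀ c : ℝ, c • α ∈ Rpos → c = 1
  hirr : ∀ S : Set V, (∀ α ∈ Rpos, ∀ β ∈ Rpos, α ∈ S → ⟪α, β⟫ ≠ 0 → β ∈ S) →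
      (∃ α ∈ Rpos, α ∈ S) → ∀ β ∈ Rpos, β ∈ S

/-- The finite Weyl group `W₀`, realized as the set of all compositions of the
reflections `s_α`, `α ∈ R`. -/
def W0Set (Rpos : Finset V) : Set (V → V) :=
  {w | ∃ l : List V, (∀ a ∈ l, a ∈ Rpos) ∧ w = l.foldr (fun a f => sref a ∘ f) id}

/-- Pairs `(α, k)` (with `α ∈ R⁺`) indexing affine hyperplanes
`H_{α+kδ} = {v | ⟪v,α⟫ + k = 0}` that are crossed positively when moving from `x` to `y`
(i.e. `x` lies on the negative side and `y` on the positive side). -/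
def sepPos (Rpos : Finset V) (x y : V) : Set (V × ℤ) :=
  {q | q.1 ∈ Rpos ∧ ⟪x, q.1⟫ + (q.2 : ℝ) < 0 ∧ 0 < ⟪y, q.1⟫ + (q.2 : ℝ)}

/-- The signed number of affine hyperplanes separating `x` from `y`:
positively crossed ones minus negatively crossed ones. -/
def signedLen (Rpos : Finset V) (x y : V) : ℤ :=
  (Nat.card (sepPos Rpos x y) : ℤ) - (Nat.card (sepPos Rpos y x) : ℤ)

/-- The total number of affine hyperplanes separating `x` from `y`. -/
def totalLen (Rpos : Finset V) (x y : V) : ℕ :=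
  Nat.card (sepPos Rpos x y) + Nat.card (sepPos Rpos y x)

/-- Labels for the generators `s_0, s_1, …, s_n` of the affine Weyl group:
`none` is the affine generator `s_0`, `some i` is the finite generator `s_i`. -/
def Gen (n : ℕ) := Option (Fin n)

/-- The affine reflection in the hyperplane `H_{α+kδ} = {x | ⟪x,α⟫ + k = 0}`. -/
def aref (α : V) (k : ℝ) : V → V := fun x => x - (⟪x, α⟫ + k) • coroot' α

/-- The root attached to a generator: `θ` (the highest root) for `s_0`,
and `α_i` for `s_i`. -/
def genRoot {n : ℕ} (D : RSData V n) (θ : V) : Gen n → V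
  | none => θ
  | some j => D.simple j

/-- The integer `k` with `s_i` the reflection in `H_{genRoot i + kδ}`:
`k = -1` for `s_0` and `k = 0` otherwise. -/
def genK {n : ℕ} : Gen n → ℤ
  | none => -1
  | some _ => 0

/-- The simple affine reflections `s_0, …, s_n`. -/
def sgen {n : ℕ} (D : RSData V n) (θ : V) (i : Gen n) : V → V :=
  aref (genRoot D θ i) ((genK i : ℤ) : ℝ)

/-- An alcove walk is encoded by its list of steps: each step records the generator
label (its type) and a Boolean, `true` for a crossing and `false` for a fold.
`walkMap` is the element of the (extended) affine Weyl group, realized as an affine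
transformation of `V`, representing the alcove reached at the end of the walk
started at the fundamental alcove `1`. -/
def walkMap {n : ℕ} (D : RSData V n) (θ : V) (steps : List (Gen n × Bool)) : V → V :=
  steps.foldl (fun g s => if s.2 = true then g ∘ sgen D θ s.1 else g) id

/-- The generator label of the `j`-th step. -/
def stepGen {n : ℕ} (steps : List (Gen n × Bool)) (j : ℕ) : Gen n :=
  (steps.getD j (none, true)).1

/-- Whether the `j`-th step is a crossing (rather than a fold). -/
def crossAt {n : ℕ} (steps : List (Gen n × Bool)) (j : ℕ) : Prop :=
  (steps.getD j (none, true)).2 = true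

/-- The direction vector of the wall met at the `j`-th step of the walk. -/
def wallDir {n : ℕ} (D : RSData V n) (θ : V) (steps : List (Gen n × Bool)) (j : ℕ) : V :=
  walkMap D θ (steps.take j) (genRoot D θ (stepGen steps j))
    - walkMap D θ (steps.take j) 0

/-- The positive root `β` such that the wall met at the `j`-th step is `H_{β+mδ}`. -/
def wallRoot {n : ℕ} (D : RSData V n) (θ : V) (steps : List (Gen n × Bool)) (j : ℕ) : V :=
  if wallDir D θ steps j ∈ D.Rpos then wallDir D θ steps j else -wallDir D θ steps j

/-- The constant `m` such that the wall met at the `j`-th step is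
`H_{β+mδ} = {x | ⟪x,β⟫ + m = 0}` with `β = wallRoot` positive. -/
def wallConst {n : ℕ} (D : RSData V n) (θ : V) (steps : List (Gen n × Bool)) (j : ℕ) : ℝ :=
  if wallDir D θ steps j ∈ D.Rpos then
    ((genK (stepGen steps j) : ℤ) : ℝ) - ⟪walkMap D θ (steps.take j) 0, wallDir D θ steps j⟫
  else
    ⟪walkMap D θ (steps.take j) 0, wallDir D θ steps j⟫ - ((genK (stepGen steps j) : ℤ) : ℝ)

/-- The position of the alcove occupied before the `j`-th step relative to the wall met
at the `j`-th step: negative means the alcove is on the negative side. -/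
def sideAt {n : ℕ} (D : RSData V n) (θ p₀ : V) (steps : List (Gen n × Bool)) (j : ℕ) : ℝ :=
  ⟪walkMap D θ (steps.take j) p₀, wallRoot D θ steps j⟫ + wallConst D θ steps j

/-- `ε⁺(p)`: the number of positive crossings. -/
def numPosCross {n : ℕ} (D : RSData V n) (θ p₀ : V) (steps : List (Gen n × Bool)) : ℕ :=
  ((Finset.range steps.length).filter fun j =>
    crossAt steps j ∧ sideAt D θ p₀ steps j < 0).card

/-- `ε⁻(p)`: the number of negative crossings. -/
def numNegCross {n : ℕ} (D : RSData V n) (θ p₀ : V) (steps : List (Gen n × Bool)) : ℕ :=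
  ((Finset.range steps.length).filter fun j =>
    crossAt steps j ∧ 0 < sideAt D θ p₀ steps j).card

/-- `f(p)`: the number of folds. -/
def numFolds {n : ℕ} (steps : List (Gen n × Bool)) : ℕ :=
  ((Finset.range steps.length).filter fun j => ¬ crossAt steps j).card

/-- A walk is positively folded when every fold leaves the walk on the positive side of
the wall on which it folds. -/
def PosFolded {n : ℕ} (D : RSData V n) (θ p₀ : V) (steps : List (Gen n × Bool)) : Prop :=
  ∀ j < steps.length, ¬ crossAt steps j → 0 < sideAt D θ p₀ steps j

/-- `dim(p) = ε⁺(p) + f(p)`. -/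
def walkDim {n : ℕ} (D : RSData V n) (θ p₀ : V) (steps : List (Gen n × Bool)) : ℕ :=
  numPosCross D θ p₀ steps + numFolds steps

/-- `ρ`, the half sum of the positive roots. -/
def halfSum {n : ℕ} (D : RSData V n) : V := (1 / 2 : ℝ) • ∑ α ∈ D.Rpos, α

/-- The length `ℓ(w)` of an element of the finite Weyl group `W₀`, computed as the number
of (automatically linear) hyperplanes separating the fundamental alcove from its image. -/
def finLen {n : ℕ} (D : RSData V n) (p₀ : V) (w : V → V) : ℕ :=
  Nat.card {α : V | α ∈ D.Rpos ∧ ⟪w p₀, α⟫ < 0}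

/-- The walk makes a negative crossing of the hyperplane `H_{α+kδ}` at position `j`. -/
def negCrossOn {n : ℕ} (D : RSData V n) (θ p₀ : V) (steps : List (Gen n × Bool))
    (α : V) (k : ℤ) (j : ℕ) : Prop :=
  j < steps.length ∧ crossAt steps j ∧ 0 < sideAt D θ p₀ steps j ∧
    wallRoot D θ steps j = α ∧ wallConst D θ steps j = (k : ℝ)

/-- `(j₀, k₀)` is the `i`-critical data of the walk (for the simple root `α`):
`H_{α+k₀δ}` is the `i`-critical hyperplane (`k₀` maximal such that the walk makes a
negative crossing of `H_{α+k₀δ}`) and `j₀` is the `i`-critical crossing (the first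
negative crossing on that hyperplane). -/
def IsCritical {n : ℕ} (D : RSData V n) (θ p₀ : V) (steps : List (Gen n × Bool))
    (α : V) (j₀ : ℕ) (k₀ : ℤ) : Prop :=
  negCrossOn D θ p₀ steps α k₀ j₀ ∧
    (∀ j k, negCrossOn D θ p₀ steps α k j → k ≤ k₀) ∧
    (∀ j < j₀, ¬ negCrossOn D θ p₀ steps α k₀ j)

/-- A fold on the hyperplane `H_{α+(k₀+1)δ}` (the hyperplane `H_{γ+δ}` of case (a) of
the definition of the root operator) at position `j`. -/
def FoldAbove {n : ℕ} (D : RSData V n) (θ p₀ : V) (steps : List (Gen n × Bool))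
    (α : V) (k₀ : ℤ) (j : ℕ) : Prop :=
  j < steps.length ∧ ¬ crossAt steps j ∧
    wallRoot D θ steps j = α ∧ wallConst D θ steps j = ((k₀ + 1 : ℤ) : ℝ)

/-- A positive crossing of the critical hyperplane `H_{α+k₀δ}` (case (b) of the
definition of the root operator) at position `j`. -/
def PosCrossOn {n : ℕ} (D : RSData V n) (θ p₀ : V) (steps : List (Gen n × Bool))
    (α : V) (k₀ : ℤ) (j : ℕ) : Prop :=
  j < steps.length ∧ crossAt steps j ∧ sideAt D θ p₀ steps j < 0 ∧
    wallRoot D θ steps j = α ∧ wallConst D θ steps j = ((k₀ : ℤ) : ℝ)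

/-- Toggle the step at position `j` between a crossing and a fold. -/
def flipAt {n : ℕ} (steps : List (Gen n × Bool)) (j : ℕ) : List (Gen n × Bool) :=
  steps.set j ((steps.getD j (none, true)).1, !(steps.getD j (none, true)).2)

lemma inner_coroot_self {α : V} (hα : α ≠ 0) : ⟪coroot' α, α⟫ = 2 := by
  have h : ⟪α, α⟫ ≠ 0 := inner_self_ne_zero.mpr hα
  simp [coroot', real_inner_smul_left]
  field_simp

lemma inner_coroot_self' {α : V} (hα : α ≠ 0) : ⟪α, coroot' α⟫ = 2 := by
  rw [real_inner_comm]; exact inner_coroot_self hα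

lemma coroot'_neg (α : V) : coroot' (-α) = -coroot' α := by
  simp [coroot']

lemma inner_coroot_comm (α β : V) : ⟪coroot' α, β⟫ = ⟪β, coroot' α⟫ := real_inner_comm _ _

lemma aref_apply (α : V) (k : ℝ) (x : V) : aref α k x = x - (⟪x, α⟫ + k) • coroot' α := rfl

lemma sref_eq_aref (α : V) : sref α = aref α 0 := by
  funext x; simp [sref, aref]

lemma aref_sub (β : V) (m : ℝ) (x y : V) : aref β m x - aref β m y = sref β (x - y) := by
  simp [aref, sref, inner_sub_left]
  module

lemma inner_aref (β : V) (hβ : β ≠ 0) (m : ℝ) (x : V) :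
    ⟪aref β m x, β⟫ = -⟪x, β⟫ - 2 * m := by
  simp [aref, inner_sub_left, real_inner_smul_left, inner_coroot_self hβ]
  ring

lemma aref_aref (β : V) (hβ : β ≠ 0) (a b : ℝ) (x : V) :
    aref β a (aref β b x) = x + (b - a) • coroot' β := by
  have h2 : ⟪coroot' β, β⟫ = 2 := inner_coroot_self hβ
  simp only [aref, inner_sub_left, real_inner_smul_left, h2]
  module

lemma aref_invol (β : V) (hβ : β ≠ 0) (m : ℝ) (x : V) : aref β m (aref β m x) = x := by
  rw [aref_aref β hβ]; simp

lemma sref_sref (β : V) (hβ : β ≠ 0) (x : V) : sref β (sref β x) = x := by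
  rw [sref_eq_aref]; exact aref_invol β hβ 0 x

lemma sref_linear (β : V) : IsLinearMap ℝ (sref β) := by
  constructor
  · intro x y; simp [sref, inner_add_left]; module
  · intro c x; simp [sref, real_inner_smul_left]; module

lemma sref_self (β : V) (hβ : β ≠ 0) : sref β β = -β := by
  have h2 : ⟪β, coroot' β⟫ = 2 := inner_coroot_self' hβ
  have : ⟪β, β⟫ • coroot' β = 2 • β := by
    simp [coroot']
    have h : ⟪β, β⟫ ≠ 0 := inner_self_ne_zero.mpr hβ
    rw [smul_smul]
    field_simp
    module
  show β - ⟪β, β⟫ • coroot' β = -β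
  rw [this]
  module

lemma inner_sref_sref (β : V) (x y : V) : ⟪sref β x, sref β y⟫ = ⟪x, y⟫ := by
  by_cases hβ : β = 0
  · simp [hβ, sref, coroot']
  have h2 : ⟪coroot' β, β⟫ = 2 := inner_coroot_self hβ
  have h2' : ⟪β, coroot' β⟫ = 2 := inner_coroot_self' hβ
  have hcc : ⟪coroot' β, coroot' β⟫ = 2 * (2 / ⟪β,β⟫) := by
    simp only [coroot']
    rw [real_inner_smul_right, real_inner_smul_left]
    have h : ⟪β, β⟫ ≠ 0 := inner_self_ne_zero.mpr hβ
    field_simp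
  simp only [sref, inner_sub_left, inner_sub_right, real_inner_smul_left,
    real_inner_smul_right, h2, h2']
  rw [hcc]
  have hc2 : ⟪x, coroot' β⟫ = 2 / ⟪β,β⟫ * ⟪x, β⟫ := by
    simp [coroot', real_inner_smul_right]
  have hc3 : ⟪coroot' β, y⟫ = 2 / ⟪β,β⟫ * ⟪β, y⟫ := by
    simp [coroot', real_inner_smul_left]
  have hxy : ⟪β, y⟫ = ⟪y, β⟫ := real_inner_comm _ _
  rw [hc2, hc3, hxy]
  ring

lemma sref_apply_expand (β x : V) : sref β x = x - ⟪x, β⟫ • coroot' β := rfl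

lemma inner_sref (β : V) (hβ : β ≠ 0) (x : V) : ⟪sref β x, β⟫ = -⟪x, β⟫ := by
  have := inner_aref β hβ 0 x
  rw [sref_eq_aref]; simpa using this

lemma sref_neg_arg (β x : V) : sref β (-x) = -sref β x := by
  have h := (sref_linear β).mk' _
  simpa using map_neg ((sref_linear β).mk' _) x

section P2

variable {n : ℕ}

variable (D : RSData V n)

lemma sref_eq_sub_smul (α β : V) : sref α β = β - ⟪β, coroot' α⟫ • α := by
  simp only [sref, coroot', real_inner_smul_right, smul_smul]
  ring_nf

lemma sum_ite_smul (z : ℝ) (i : Fin n) :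
    ∑ j, (if j = i then z else 0) • D.simple j = z • D.simple i := by
  rw [Finset.sum_eq_single i]
  · simp
  · intro j _ hj; simp [hj]
  · intro hi; exact absurd (Finset.mem_univ i) hi

lemma coeff_eq (c d : Fin n → ℝ)
    (h : ∑ j, c j • D.simple j = ∑ j, d j • D.simple j) (j : Fin n) : c j = d j := by
  have h0 : ∑ i, (c i - d i) • D.simple i = 0 := by
    simp only [sub_smul, Finset.sum_sub_distrib, h, sub_self]
  have := Fintype.linearIndependent_iff.mp D.hind (fun i => c i - d i) h0 j
  linarith

lemma simple_refl_pos (i : Fin n) (β : V) (hβ : β ∈ D.Rpos) (hne : β ≠ D.simple i) :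
    sref (D.simple i) β ∈ D.Rpos := by
  set α := D.simple i with hα
  rcases D.hrefl α (D.hsimple i) β hβ with h | h
  · exact h
  exfalso
  set z : ℝ := ⟪β, coroot' α⟫ with hz
  obtain ⟨e, he⟩ := D.hposcomb β hβ
  obtain ⟨d, hd⟩ := D.hposcomb _ h
  -- -(β - z • α) = ∑ d • s, β = ∑ e • s ⇒ ∑ (d+e) • s = z • α = ∑ ite
  have key : ∀ j, (d j : ℝ) + e j = (if j = i then z else 0) := by
    intro j
    apply coeff_eq D (fun j => (d j : ℝ) + e j) (fun j => if j = i then z else 0)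
    have h1 : ∑ j, ((d j : ℝ) + e j) • D.simple j = (∑ j, (d j:ℝ) • D.simple j) + ∑ j, (e j:ℝ) • D.simple j := by
      simp [add_smul, Finset.sum_add_distrib]
    have h2 : ∑ j, (if j = i then z else 0) • D.simple j = z • α := by
      rw [sum_ite_smul D z i, ← hα]
    rw [h1, h2, ← hd, ← he]
    rw [sref_eq_sub_smul, ← hz]
    module
  have hzi := key i
  simp at hzi
  have hej : ∀ j, j ≠ i → e j = 0 := by
    intro j hj
    have := key j
    simp [hj] at this
    have h1 : (0:ℝ) ≤ d j := Nat.cast_nonneg _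
    have h2 : (0:ℝ) ≤ e j := Nat.cast_nonneg _
    have hr : (e j : ℝ) = 0 := by linarith
    exact_mod_cast hr
  have hβα : β = ((e i : ℝ)) • α := by
    rw [he, Finset.sum_eq_single i (fun j _ hj => by rw [hej j hj]; simp)
      (fun hi => absurd (Finset.mem_univ i) hi)]
  have := D.hred α (D.hsimple i) (e i) (by rw [← hβα]; exact hβ)
  rw [this] at hβα
  simp at hβα
  exact hne hβα

lemma theta_simple_nonneg (θ : V) (hθ : θ ∈ D.Rpos)
    (hθhigh : ∀ β ∈ D.Rpos, ∃ c : Fin n → ℝ, (∀ i, 0 ≤ c i) ∧ θ - β = ∑ i, c i • D.simple i)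
    (i : Fin n) : 0 ≤ ⟪θ, D.simple i⟫ := by
  by_contra hneg
  push_neg at hneg
  set α := D.simple i with hα
  have hs : (0:ℝ) < ⟪α, α⟫ :=
    lt_of_le_of_ne real_inner_self_nonneg (Ne.symm (inner_self_ne_zero.mpr (D.hnz α (D.hsimple i))))
  set z : ℝ := ⟪θ, coroot' α⟫ with hz
  have hzneg : z < 0 := by
    rw [hz, coroot', real_inner_smul_right]
    have hta : ⟪θ, α⟫ < 0 := hneg
    have h2 : 0 < 2 / ⟪α,α⟫ := by positivity
    nlinarith
  have hsref : sref α θ = θ - z • α := by rw [sref_eq_sub_smul, hz]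
  obtain ⟨t, ht⟩ := D.hposcomb θ hθ
  rcases D.hrefl α (D.hsimple i) θ hθ with h | h
  · obtain ⟨c, hc0, hc⟩ := hθhigh _ h
    have hcoeff : ∀ j, (if j = i then z else 0) = c j := by
      intro j
      apply coeff_eq D _ _ _ j
      have h2 : ∑ j, (if j = i then z else 0) • D.simple j = z • α := by
        rw [sum_ite_smul D z i, ← hα]
      rw [h2, ← hc, hsref]
      module
    have := hcoeff i
    simp at this
    linarith [hc0 i, this]
  · obtain ⟨d, hd⟩ := D.hposcomb _ h
    have hcoeff : ∀ j, ((d j : ℝ) + t j) = (if j = i then z else 0) := by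
      intro j
      apply coeff_eq D _ _ _ j
      have h1 : ∑ j, ((d j : ℝ) + t j) • D.simple j = (∑ j, (d j:ℝ) • D.simple j) + ∑ j, (t j:ℝ) • D.simple j := by
        simp [add_smul, Finset.sum_add_distrib]
      have h2 : ∑ j, (if j = i then z else 0) • D.simple j = z • α := by
        rw [sum_ite_smul D z i, ← hα]
      rw [h1, h2, ← hd, ← ht, hsref]
      module
    have := hcoeff i
    simp at this
    have h1 : (0:ℝ) ≤ d i := Nat.cast_nonneg _
    have h2 : (0:ℝ) ≤ t i := Nat.cast_nonneg _
    linarith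

lemma theta_inner_nonneg (θ : V) (hθ : θ ∈ D.Rpos)
    (hθhigh : ∀ β ∈ D.Rpos, ∃ c : Fin n → ℝ, (∀ i, 0 ≤ c i) ∧ θ - β = ∑ i, c i • D.simple i)
    (δ : V) (hδ : δ ∈ D.Rpos) : 0 ≤ ⟪δ, θ⟫ := by
  obtain ⟨e, he⟩ := D.hposcomb δ hδ
  rw [he, sum_inner]
  apply Finset.sum_nonneg
  intro j _
  rw [real_inner_smul_left]
  have h1 := theta_simple_nonneg D θ hθ hθhigh j
  rw [real_inner_comm] at h1
  positivity

end P2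
section P3
variable {n : ℕ} (D : RSData V n)

lemma z_theta (θ : V) (hθ : θ ∈ D.Rpos)
    (hθhigh : ∀ β ∈ D.Rpos, ∃ c : Fin n → ℝ, (∀ i, 0 ≤ c i) ∧ θ - β = ∑ i, c i • D.simple i)
    (δ : V) (hδ : δ ∈ D.Rpos) (hne : δ ≠ θ) :
    ⟪δ, coroot' θ⟫ = 0 ∨ (⟪δ, coroot' θ⟫ = 1 ∧ θ - δ ∈ D.Rpos) := by
  obtain ⟨z, hzv⟩ := D.hcrys θ hθ δ hδ
  have hs : (0:ℝ) < ⟪θ, θ⟫ :=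
    lt_of_le_of_ne real_inner_self_nonneg (Ne.symm (inner_self_ne_zero.mpr (D.hnz θ hθ)))
  have hznn : (0:ℝ) ≤ z := by
    rw [← hzv, coroot', real_inner_smul_right]
    have h1 : 0 ≤ ⟪δ, θ⟫ := theta_inner_nonneg D θ hθ hθhigh δ hδ
    positivity
  have hz0 : 0 ≤ z := by exact_mod_cast hznn
  rcases Nat.lt_or_ge 0 z.toNat with hzpos | hzz
  swap
  · left
    have : z = 0 := by omega
    rw [hzv, this]; simp
  have hz1 : 1 ≤ z := by omega
  have hsref : sref θ δ = δ - (z:ℝ) • θ := by rw [sref_eq_sub_smul, hzv]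
  obtain ⟨e, he⟩ := D.hposcomb δ hδ
  obtain ⟨t, ht⟩ := D.hposcomb θ hθ
  obtain ⟨c, hc0, hc⟩ := hθhigh δ hδ
  have het : ∀ j, (e j : ℝ) ≤ t j := by
    intro j
    have hcoeff : (t j : ℝ) - e j = c j := by
      apply coeff_eq D (fun j => (t j:ℝ) - e j) c
      simp only [sub_smul, Finset.sum_sub_distrib, ← he, ← ht, ← hc]
    linarith [hc0 j]
  rcases D.hrefl θ hθ δ hδ with h | h
  · exfalso
    obtain ⟨d, hd⟩ := D.hposcomb _ h
    have hcoeff : ∀ j, (e j : ℝ) - z * t j = d j := by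
      intro j
      apply coeff_eq D (fun j => (e j:ℝ) - z * t j) (fun j => (d j : ℝ))
      simp only [sub_smul, Finset.sum_sub_distrib, smul_smul]
      rw [← he, ← hd, hsref]
      rw [show ∑ j, ((z:ℝ) * t j) • D.simple j = (z:ℝ) • ∑ j, (t j:ℝ) • D.simple j by
        rw [Finset.smul_sum]; exact Finset.sum_congr rfl fun j _ => by rw [smul_smul]]
      rw [← ht]
    have hkey : ∀ j, (d j : ℝ) + ((z:ℝ) - 1) * t j ≤ 0 := by
      intro j
      have h1 := hcoeff j
      have h2 := het j
      nlinarith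
    have hall : ∀ j, (d j : ℝ) = 0 ∧ ((z:ℝ) - 1) * t j = 0 := by
      intro j
      have h1 : (0:ℝ) ≤ d j := Nat.cast_nonneg _
      have h2 : (0:ℝ) ≤ ((z:ℝ) - 1) * t j := by
        have : (1:ℝ) ≤ z := by exact_mod_cast hz1
        have h3 : (0:ℝ) ≤ t j := Nat.cast_nonneg _
        nlinarith
      constructor <;> nlinarith [hkey j]
    rcases eq_or_lt_of_le hz1 with hz1' | hz2
    · -- z = 1 : sref θ δ = 0 ∈ Rpos, contradiction
      have : sref θ δ = 0 := by
        rw [hd, Finset.sum_eq_zero]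
        intro j _
        rw [show ((d j : ℝ)) = 0 from (hall j).1]; simp
      exact D.hnz _ h this
    · -- z ≥ 2 : t = 0, θ = 0
      have hθ0 : θ = 0 := by
        rw [ht, Finset.sum_eq_zero]
        intro j _
        have h2 : ((z:ℝ) - 1) ≠ 0 := by
          have : (2:ℝ) ≤ z := by exact_mod_cast hz2
          linarith
        have := (hall j).2
        have ht0 : (t j : ℝ) = 0 := by
          rcases mul_eq_zero.mp this with h' | h'
          · exact absurd h' h2
          · exact h'
        rw [ht0]; simp
      exact D.hnz θ hθ hθ0
  · -- -(sref θ δ) = z•θ - δ ∈ Rpos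
    have hmem : (z:ℝ) • θ - δ ∈ D.Rpos := by
      have : -(sref θ δ) = (z:ℝ) • θ - δ := by rw [hsref]; module
      rwa [this] at h
    rcases eq_or_lt_of_le hz1 with hz1' | hz2
    · right
      constructor
      · rw [hzv, ← hz1']; simp
      · have : ((z:ℝ)) • θ - δ = θ - δ := by rw [← hz1']; simp
        rwa [this] at hmem
    · exfalso
      obtain ⟨c', hc0', hc'⟩ := hθhigh _ hmem
      have hcoeff : ∀ j, (e j : ℝ) - ((z:ℝ) - 1) * t j = c' j := by
        intro j
        apply coeff_eq D (fun j => (e j:ℝ) - ((z:ℝ) - 1) * t j) c'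
        simp only [sub_smul, Finset.sum_sub_distrib]
        rw [← he, ← hc']
        rw [show ∑ j, (((z:ℝ) - 1) * t j) • D.simple j = ((z:ℝ) - 1) • ∑ j, (t j:ℝ) • D.simple j by
          rw [Finset.smul_sum]; exact Finset.sum_congr rfl fun j _ => by rw [smul_smul]]
        rw [← ht]
        module
      have hge : ∀ j, (t j : ℝ) ≤ e j := by
        intro j
        have h1 := hcoeff j
        have h2 := hc0' j
        have h3 : (0:ℝ) ≤ t j := Nat.cast_nonneg _
        have h4 : (2:ℝ) ≤ z := by exact_mod_cast hz2
        nlinarith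
      have : δ = θ := by
        rw [he, ht]
        apply Finset.sum_congr rfl
        intro j _
        have : (e j : ℝ) = t j := le_antisymm (het j) (hge j)
        rw [this]
      exact hne this
end P3
section P4
variable {n : ℕ} (D : RSData V n) (θ : V)

lemma aref_eq_sref_sub (α : V) (k : ℝ) (x : V) :
    aref α k x = sref α x - k • coroot' α := by
  simp [aref, sref, add_smul]; module

structure AffData (D : RSData V n) (w : V → V) where
  L : V → V
  Linv : V → V
  t : V
  map_eq : ∀ x, w x = L x + t
  lin : IsLinearMap ℝ L
  inner_L : ∀ x y, ⟪L x, L y⟫ = ⟪x, y⟫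
  L_linv : ∀ x, L (Linv x) = x
  linv_L : ∀ x, Linv (L x) = x
  root_pm : ∀ γ ∈ D.Rpos, L γ ∈ D.Rpos ∨ -(L γ) ∈ D.Rpos
  linv_root_pm : ∀ γ ∈ D.Rpos, Linv γ ∈ D.Rpos ∨ -(Linv γ) ∈ D.Rpos
  t_int : ∀ γ ∈ D.Rpos, ∃ z : ℤ, ⟪t, γ⟫ = (z : ℝ)

namespace AffData

variable {D} {w : V → V} (A : AffData D w)

lemma inner_L_left (x y : V) : ⟪A.L x, y⟫ = ⟪x, A.Linv y⟫ := by
  conv_lhs => rw [show y = A.L (A.Linv y) from (A.L_linv y).symm]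
  rw [A.inner_L]

lemma inner_Linv_left (x y : V) : ⟪A.Linv x, y⟫ = ⟪x, A.L y⟫ :=
  calc ⟪A.Linv x, y⟫ = ⟪y, A.Linv x⟫ := real_inner_comm _ _
  _ = ⟪A.L y, x⟫ := (A.inner_L_left y x).symm
  _ = ⟪x, A.L y⟫ := real_inner_comm _ _

lemma L_zero : A.L 0 = 0 := A.lin.mk' (A.L) |>.map_zero

lemma L_coroot' (γ : V) : A.L (coroot' γ) = coroot' (A.L γ) := by
  rw [coroot', coroot', A.lin.map_smul, A.inner_L]

lemma map_add' (x u : V) : w (x + u) = w x + A.L u := by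
  rw [A.map_eq, A.map_eq, A.lin.map_add]; abel

lemma L_neg (x : V) : A.L (-x) = -A.L x := by
  have h := map_neg (IsLinearMap.mk' A.L A.lin) x
  simpa using h

lemma L_sub (x y : V) : A.L (x - y) = A.L x - A.L y := by
  have h := map_sub (IsLinearMap.mk' A.L A.lin) x y
  simpa using h

def congrFun' {w' : V → V} (h : ∀ x, w x = w' x) : AffData D w' :=
  { A with map_eq := fun x => (h x).symm.trans (A.map_eq x) }

end AffData

lemma genRoot_mem (hθ : θ ∈ D.Rpos) (g : Gen n) : genRoot D θ g ∈ D.Rpos := by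
  cases g with
  | none => exact hθ
  | some j => exact D.hsimple j

def affId : AffData D (id : V → V) where
  L := id
  Linv := id
  t := 0
  map_eq := fun x => by simp
  lin := ⟨fun _ _ => rfl, fun _ _ => rfl⟩
  inner_L := fun _ _ => rfl
  L_linv := fun _ => rfl
  linv_L := fun _ => rfl
  root_pm := fun γ hγ => Or.inl hγ
  linv_root_pm := fun γ hγ => Or.inl hγ
  t_int := fun γ _ => ⟨0, by simp⟩

lemma sref_root_pm (hθ : θ ∈ D.Rpos) {G : V} (hG : G ∈ D.Rpos) (x : V)
    (hx : x ∈ D.Rpos ∨ -x ∈ D.Rpos) : sref G x ∈ D.Rpos ∨ -(sref G x) ∈ D.Rpos := by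
  rcases hx with h | h
  · exact D.hrefl G hG x h
  · have hs : sref G x = -(sref G (-x)) := by
      rw [show sref G (-x) = -(sref G x) from by
        simpa using map_neg ((sref_linear G).mk' _) x]
      simp
    rcases D.hrefl G hG (-x) h with h' | h'
    · right; rw [hs]; simpa using h'
    · left; rw [hs]; exact h'

def affStep (hθ : θ ∈ D.Rpos) {w : V → V} (A : AffData D w) (g : Gen n) :
    AffData D (w ∘ sgen D θ g) := by
  set G := genRoot D θ g with hG
  have hGmem : G ∈ D.Rpos := genRoot_mem D θ hθ g
  have hGnz : G ≠ 0 := D.hnz G hGmem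
  exact {
    L := A.L ∘ sref G
    Linv := sref G ∘ A.Linv
    t := A.t - ((genK g : ℤ) : ℝ) • A.L (coroot' G)
    map_eq := fun x => by
      have h1 : sgen D θ g x = sref G x - ((genK g : ℤ) : ℝ) • coroot' G := by
        rw [show sgen D θ g = aref G ((genK g : ℤ) : ℝ) from rfl, aref_eq_sref_sub]
      have h2 : A.L (sref G x - ((genK g : ℤ) : ℝ) • coroot' G)
          = A.L (sref G x) - ((genK g : ℤ) : ℝ) • A.L (coroot' G) := by
        rw [A.L_sub, A.lin.map_smul]
      simp only [Function.comp_apply, h1, A.map_eq, h2]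
      abel
    lin := by
      constructor
      · intro x y; simp [Function.comp, (sref_linear G).map_add, A.lin.map_add]
      · intro c x; simp [Function.comp, (sref_linear G).map_smul, A.lin.map_smul]
    inner_L := fun x y => by simp [Function.comp, A.inner_L, inner_sref_sref]
    L_linv := fun x => by simp [Function.comp, sref_sref G hGnz, A.L_linv]
    linv_L := fun x => by simp [Function.comp, A.linv_L, sref_sref G hGnz]
    root_pm := fun γ hγ => by
      have h1 := sref_root_pm D θ hθ hGmem γ (Or.inl hγ)
      rcases h1 with h | h
      · exact A.root_pm _ h
      · rcases A.root_pm _ h with h' | h'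
        · right
          simp only [Function.comp_apply]
          rw [show A.L (sref G γ) = -(A.L (-(sref G γ))) from by rw [A.L_neg]; simp]
          simpa using h'
        · left
          simp only [Function.comp_apply]
          rw [show A.L (sref G γ) = -(A.L (-(sref G γ))) from by rw [A.L_neg]; simp]
          exact h'
    linv_root_pm := fun γ hγ => by
      rcases A.linv_root_pm γ hγ with h | h
      · exact sref_root_pm D θ hθ hGmem _ (Or.inl h)
      · have := sref_root_pm D θ hθ hGmem (A.Linv γ) (Or.inr h)
        exact this
    t_int := fun γ hγ => by
      obtain ⟨z1, hz1⟩ := A.t_int γ hγ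
      have hLc : ⟪A.L (coroot' G), γ⟫ = ⟪coroot' G, A.Linv γ⟫ := A.inner_L_left _ _
      have hinv := A.linv_root_pm γ hγ
      rcases hinv with h | h
      · obtain ⟨z2, hz2⟩ := D.hcrys G hGmem _ h
        refine ⟨z1 - genK g * z2, ?_⟩
        rw [inner_sub_left, real_inner_smul_left, hz1, hLc]
        rw [real_inner_comm, hz2]
        push_cast; ring
      · obtain ⟨z2, hz2⟩ := D.hcrys G hGmem _ h
        refine ⟨z1 + genK g * z2, ?_⟩
        rw [inner_sub_left, real_inner_smul_left, hz1, hLc]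
        rw [real_inner_comm, show ⟪A.Linv γ, coroot' G⟫ = -⟪-(A.Linv γ), coroot' G⟫ from by
          simp, hz2]
        push_cast; ring }

lemma walkMap_congr_aux (l : List (Gen n × Bool)) :
    ∀ g : V → V, l.foldl (fun g s => if s.2 = true then g ∘ sgen D θ s.1 else g) g
      = g ∘ walkMap D θ l := by
  induction l with
  | nil => intro g; rfl
  | cons s l ih =>
    intro g
    show List.foldl _ (if s.2 = true then g ∘ sgen D θ s.1 else g) l = _
    rw [ih]
    have : walkMap D θ (s :: l)
        = (if s.2 = true then id ∘ sgen D θ s.1 else id) ∘ walkMap D θ l := by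
      show List.foldl _ (if s.2 = true then id ∘ sgen D θ s.1 else id) l = _
      rw [ih]
    rw [this]
    by_cases h : s.2 = true <;> simp [h, Function.comp_assoc]

lemma walkMap_append (l₁ l₂ : List (Gen n × Bool)) :
    walkMap D θ (l₁ ++ l₂) = walkMap D θ l₁ ∘ walkMap D θ l₂ := by
  unfold walkMap
  rw [List.foldl_append]
  rw [walkMap_congr_aux]
  rfl

lemma walkMap_singleton (s : Gen n × Bool) :
    walkMap D θ [s] = if s.2 = true then sgen D θ s.1 else id := by
  unfold walkMap
  by_cases h : s.2 = true <;> simp [h] <;> rfl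

noncomputable def affWalk (hθ : θ ∈ D.Rpos) :
    ∀ l : List (Gen n × Bool), AffData D (walkMap D θ l) := fun l => by
  induction l using List.reverseRecOn with
  | nil => exact affId D
  | append_singleton l s A =>
    have hB : AffData D (walkMap D θ l ∘ (if s.2 = true then sgen D θ s.1 else id)) := by
      by_cases h : s.2 = true
      · simp only [h, if_true]; exact affStep D θ hθ A s.1
      · simp only [h, if_false]
        exact A.congrFun' (fun x => rfl)
    exact hB.congrFun' (fun x => by rw [walkMap_append, walkMap_singleton])
end P4
section P5
variable {n : ℕ} (D : RSData V n) (θ : V)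

def wsign (l : List (Gen n × Bool)) (j : ℕ) : ℝ :=
  if wallDir D θ l j ∈ D.Rpos then 1 else -1

lemma wsign_sq (l : List (Gen n × Bool)) (j : ℕ) :
    wsign D θ l j = 1 ∨ wsign D θ l j = -1 := by
  unfold wsign; split_ifs <;> simp

lemma wallDir_eq_L (hθ : θ ∈ D.Rpos) (l : List (Gen n × Bool)) (j : ℕ) :
    wallDir D θ l j = (affWalk D θ hθ (l.take j)).L (genRoot D θ (stepGen l j)) := by
  set A := affWalk D θ hθ (l.take j)
  unfold wallDir
  rw [A.map_eq, A.map_eq, A.L_zero]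
  abel

lemma wallRoot_eq (l : List (Gen n × Bool)) (j : ℕ) :
    wallRoot D θ l j = wsign D θ l j • wallDir D θ l j := by
  unfold wallRoot wsign
  split_ifs <;> simp

lemma wallRoot_mem (hθ : θ ∈ D.Rpos) (l : List (Gen n × Bool)) (j : ℕ) :
    wallRoot D θ l j ∈ D.Rpos := by
  have hd := wallDir_eq_L D θ hθ l j
  set A := affWalk D θ hθ (l.take j)
  have hpm := A.root_pm _ (genRoot_mem D θ hθ (stepGen l j))
  unfold wallRoot
  split_ifs with h
  · exact h
  · rw [hd] at h ⊢
    rcases hpm with h' | h'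
    · exact absurd h' h
    · exact h'

lemma wallRoot_ne_zero (hθ : θ ∈ D.Rpos) (l : List (Gen n × Bool)) (j : ℕ) :
    wallRoot D θ l j ≠ 0 := D.hnz _ (wallRoot_mem D θ hθ l j)

lemma side_formula (hθ : θ ∈ D.Rpos) (l : List (Gen n × Bool)) (j : ℕ) (x : V) :
    ⟪walkMap D θ (l.take j) x, wallRoot D θ l j⟫ + wallConst D θ l j
      = wsign D θ l j *
        (⟪x, genRoot D θ (stepGen l j)⟫ + ((genK (stepGen l j) : ℤ) : ℝ)) := by
  have hd := wallDir_eq_L D θ hθ l j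
  set A := affWalk D θ hθ (l.take j) with hA
  set g := genRoot D θ (stepGen l j)
  have h0 : walkMap D θ (l.take j) 0 = A.t := by rw [A.map_eq, A.L_zero]; abel
  have hx : ∀ y : V, ⟪walkMap D θ (l.take j) y, A.L g⟫ = ⟪y, g⟫ + ⟪A.t, A.L g⟫ := by
    intro y
    rw [A.map_eq, inner_add_left, A.inner_L]
  unfold wallRoot wallConst wsign
  split_ifs with h
  · rw [hd] at *
    rw [hx x, h0]
    ring
  · rw [hd] at *
    rw [inner_neg_right, hx x, h0]
    ring

lemma sideAt_eq (hθ : θ ∈ D.Rpos) (p₀ : V) (l : List (Gen n × Bool)) (j : ℕ) :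
    sideAt D θ p₀ l j = wsign D θ l j *
        (⟪p₀, genRoot D θ (stepGen l j)⟫ + ((genK (stepGen l j) : ℤ) : ℝ)) :=
  side_formula D θ hθ l j p₀

lemma genVal_bounds (hθ : θ ∈ D.Rpos)
    (hθhigh : ∀ β ∈ D.Rpos, ∃ c : Fin n → ℝ, (∀ i, 0 ≤ c i) ∧ θ - β = ∑ i, c i • D.simple i)
    (p₀ : V) (hp₀ : ∀ α ∈ D.Rpos, 0 < ⟪p₀, α⟫ ∧ ⟪p₀, α⟫ < 1) (g : Gen n) :
    (-1 < ⟪p₀, genRoot D θ g⟫ + ((genK g : ℤ) : ℝ)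
      ∧ ⟪p₀, genRoot D θ g⟫ + ((genK g : ℤ) : ℝ) < 1)
      ∧ ⟪p₀, genRoot D θ g⟫ + ((genK g : ℤ) : ℝ) ≠ 0 := by
  cases g with
  | none =>
    have := hp₀ θ hθ
    simp only [genRoot, genK]
    push_cast
    constructor
    · constructor <;> linarith [this.1, this.2]
    · intro h; linarith [this.1, this.2]
  | some j =>
    have := hp₀ _ (D.hsimple j)
    simp only [genRoot, genK]
    push_cast
    constructor
    · constructor <;> linarith [this.1, this.2]
    · intro h; linarith [this.1, this.2]

lemma sideAt_bounds (hθ : θ ∈ D.Rpos)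
    (hθhigh : ∀ β ∈ D.Rpos, ∃ c : Fin n → ℝ, (∀ i, 0 ≤ c i) ∧ θ - β = ∑ i, c i • D.simple i)
    (p₀ : V) (hp₀ : ∀ α ∈ D.Rpos, 0 < ⟪p₀, α⟫ ∧ ⟪p₀, α⟫ < 1) (l : List (Gen n × Bool)) (j : ℕ) :
    (-1 < sideAt D θ p₀ l j ∧ sideAt D θ p₀ l j < 1) ∧ sideAt D θ p₀ l j ≠ 0 := by
  rw [sideAt_eq D θ hθ p₀ l j]
  obtain ⟨⟨h1, h2⟩, h3⟩ := genVal_bounds D θ hθ hθhigh p₀ hp₀ (stepGen l j)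
  rcases wsign_sq D θ l j with h | h <;> rw [h] <;>
    refine ⟨⟨by linarith, by linarith⟩, by intro hc; apply h3; linarith⟩

lemma wallConst_int (hθ : θ ∈ D.Rpos) (l : List (Gen n × Bool)) (j : ℕ) :
    ∃ z : ℤ, wallConst D θ l j = (z : ℝ) := by
  have hf := side_formula D θ hθ l j 0
  set A := affWalk D θ hθ (l.take j)
  have h0 : walkMap D θ (l.take j) 0 = A.t := by rw [A.map_eq, A.L_zero]; abel
  rw [h0, inner_zero_left] at hf
  obtain ⟨z1, hz1⟩ := A.t_int _ (wallRoot_mem D θ hθ l j)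
  rcases wsign_sq D θ l j with h | h <;> rw [h] at hf
  · exact ⟨genK (stepGen l j) - z1, by push_cast; rw [← hz1]; linarith [hf]⟩
  · exact ⟨-genK (stepGen l j) - z1, by push_cast; rw [← hz1]; linarith [hf]⟩

lemma conj_walk (hθ : θ ∈ D.Rpos) (l : List (Gen n × Bool)) (j : ℕ) (x : V) :
    walkMap D θ (l.take j) (sgen D θ (stepGen l j) x)
      = aref (wallRoot D θ l j) (wallConst D θ l j) (walkMap D θ (l.take j) x) := by
  have hd := wallDir_eq_L D θ hθ l j
  set A := affWalk D θ hθ (l.take j) with hA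
  set g := genRoot D θ (stepGen l j) with hg
  set k : ℝ := ((genK (stepGen l j) : ℤ) : ℝ)
  have hGmem : g ∈ D.Rpos := genRoot_mem D θ hθ (stepGen l j)
  have hlhs : walkMap D θ (l.take j) (sgen D θ (stepGen l j) x)
      = walkMap D θ (l.take j) x - (⟪x, g⟫ + k) • A.L (coroot' g) := by
    have : sgen D θ (stepGen l j) x = x + (-(⟪x, g⟫ + k)) • coroot' g := by
      show aref g k x = _
      rw [aref_apply]; module
    rw [this, A.map_add', A.lin.map_smul]
    module
  rw [hlhs, aref_apply]
  have hside := side_formula D θ hθ l j x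
  rw [hside]
  have hcor : coroot' (wallRoot D θ l j) = wsign D θ l j • A.L (coroot' g) := by
    rw [wallRoot_eq D θ l j, hd]
    rcases wsign_sq D θ l j with h | h <;> rw [h] <;> simp [A.L_coroot', coroot'_neg]
  rw [hcor]
  rcases wsign_sq D θ l j with h | h <;> rw [h] <;> simp <;> module

end P5
section P6
variable {n : ℕ} (D : RSData V n) (θ : V)

lemma getD_take {l : List (Gen n × Bool)} {j m : ℕ} (h : j < m) (d : Gen n × Bool) :
    (l.take m).getD j d = l.getD j d := by
  by_cases hj : j < l.length
  · have h1 : j < (l.take m).length := by simp [List.length_take]; omega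
    rw [List.getD_eq_getElem _ _ h1, List.getD_eq_getElem _ _ hj]
    exact List.getElem_take
  · push_neg at hj
    rw [List.getD_eq_default _ _ (by simp [List.length_take]; omega),
      List.getD_eq_default _ _ hj]

lemma stepGen_take {l : List (Gen n × Bool)} {j m : ℕ} (h : j < m) :
    stepGen (l.take m) j = stepGen l j := by
  unfold stepGen; rw [getD_take h]

lemma crossAt_take {l : List (Gen n × Bool)} {j m : ℕ} (h : j < m) :
    crossAt (l.take m) j ↔ crossAt l j := by
  unfold crossAt; rw [getD_take h]

lemma take_take_eq (l : List (Gen n × Bool)) {j m : ℕ} (h : j ≤ m) :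
    (l.take m).take j = l.take j := by
  rw [List.take_take, min_eq_left h]

lemma wallDir_take (l : List (Gen n × Bool)) {j m : ℕ} (h : j < m) :
    wallDir D θ (l.take m) j = wallDir D θ l j := by
  unfold wallDir; rw [take_take_eq l (le_of_lt h), stepGen_take h]

lemma wallRoot_take (l : List (Gen n × Bool)) {j m : ℕ} (h : j < m) :
    wallRoot D θ (l.take m) j = wallRoot D θ l j := by
  unfold wallRoot; rw [wallDir_take D θ l h]

lemma wallConst_take (l : List (Gen n × Bool)) {j m : ℕ} (h : j < m) :
    wallConst D θ (l.take m) j = wallConst D θ l j := by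
  unfold wallConst
  rw [wallDir_take D θ l h, take_take_eq l (le_of_lt h), stepGen_take h]

-- flip basics
lemma length_flipAt (l : List (Gen n × Bool)) (j : ℕ) : (flipAt l j).length = l.length := by
  simp [flipAt]

lemma getD_flipAt_ne (l : List (Gen n × Bool)) {j j' : ℕ} (h : j' ≠ j) (d : Gen n × Bool) :
    (flipAt l j).getD j' d = l.getD j' d := by
  by_cases hj : j' < l.length
  · rw [List.getD_eq_getElem _ _ (by rw [length_flipAt]; exact hj),
      List.getD_eq_getElem _ _ hj]
    exact List.getElem_set_ne (Ne.symm h) _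
  · push_neg at hj
    rw [List.getD_eq_default _ _ (by rw [length_flipAt]; exact hj),
      List.getD_eq_default _ _ hj]

lemma getD_flipAt_self (l : List (Gen n × Bool)) {j : ℕ} (hj : j < l.length)
    (d : Gen n × Bool) :
    (flipAt l j).getD j d = ((l.getD j d).1, !(l.getD j d).2) := by
  have h1 : l.getD j (none, true) = l[j] := List.getD_eq_getElem _ _ hj
  have h2 : l.getD j d = l[j] := List.getD_eq_getElem _ _ hj
  unfold flipAt
  rw [h1, h2, List.getD_eq_getElem _ _ (by simpa using hj)]
  exact List.getElem_set_self _

lemma stepGen_flipAt (l : List (Gen n × Bool)) (j j' : ℕ) :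
    stepGen (flipAt l j) j' = stepGen l j' := by
  unfold stepGen
  by_cases h : j' = j
  · subst h
    by_cases hj : j' < l.length
    · rw [getD_flipAt_self l hj]
    · push_neg at hj
      rw [List.getD_eq_default _ _ (by rw [length_flipAt]; exact hj),
        List.getD_eq_default _ _ hj]
  · rw [getD_flipAt_ne l h]

lemma crossAt_flipAt_ne (l : List (Gen n × Bool)) {j j' : ℕ} (h : j' ≠ j) :
    crossAt (flipAt l j) j' ↔ crossAt l j' := by
  unfold crossAt; rw [getD_flipAt_ne l h]

lemma crossAt_flipAt_self (l : List (Gen n × Bool)) {j : ℕ} (hj : j < l.length) :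
    crossAt (flipAt l j) j ↔ ¬ crossAt l j := by
  unfold crossAt
  rw [getD_flipAt_self l hj]
  simp

lemma take_flipAt_le (l : List (Gen n × Bool)) {j m : ℕ} (h : m ≤ j) :
    (flipAt l j).take m = l.take m := by
  unfold flipAt
  rw [List.take_set]
  apply List.set_eq_of_length_le
  simp [List.length_take]; omega

lemma take_flipAt_gt (l : List (Gen n × Bool)) {j m : ℕ} (h : j < m) :
    (flipAt l j).take m = flipAt (l.take m) j := by
  unfold flipAt
  rw [List.take_set, getD_take h]

lemma wallDir_flipAt_le (l : List (Gen n × Bool)) {j m : ℕ} (h : j ≤ m) :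
    wallDir D θ (flipAt l m) j = wallDir D θ l j := by
  unfold wallDir
  rw [take_flipAt_le l h, stepGen_flipAt]

lemma wallRoot_flipAt_le (l : List (Gen n × Bool)) {j m : ℕ} (h : j ≤ m) :
    wallRoot D θ (flipAt l m) j = wallRoot D θ l j := by
  unfold wallRoot; rw [wallDir_flipAt_le D θ l h]

lemma wallConst_flipAt_le (l : List (Gen n × Bool)) {j m : ℕ} (h : j ≤ m) :
    wallConst D θ (flipAt l m) j = wallConst D θ l j := by
  unfold wallConst
  rw [wallDir_flipAt_le D θ l h, take_flipAt_le l h, stepGen_flipAt]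

lemma sideAt_flipAt_le (p₀ : V) (l : List (Gen n × Bool)) {j m : ℕ} (h : j ≤ m) :
    sideAt D θ p₀ (flipAt l m) j = sideAt D θ p₀ l j := by
  unfold sideAt
  rw [take_flipAt_le l h, wallRoot_flipAt_le D θ l h, wallConst_flipAt_le D θ l h]

lemma wsign_flipAt_le (l : List (Gen n × Bool)) {j m : ℕ} (h : j ≤ m) :
    wsign D θ (flipAt l m) j = wsign D θ l j := by
  unfold wsign; rw [wallDir_flipAt_le D θ l h]

-- decomposition of walkMap across a flip
lemma walkMap_flipAt (hθ : θ ∈ D.Rpos) (l : List (Gen n × Bool)) (j : ℕ) (hj : j < l.length) :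
    walkMap D θ (flipAt l j)
      = aref (wallRoot D θ l j) (wallConst D θ l j) ∘ walkMap D θ l := by
  have hl : l = l.take j ++ l[j] :: l.drop (j + 1) := by
    conv_lhs => rw [← List.take_append_drop j l]
    rw [List.drop_eq_getElem_cons hj]
  have hfl : flipAt l j = l.take j ++ (l[j].1, !l[j].2) :: l.drop (j + 1) := by
    unfold flipAt
    rw [List.getD_eq_getElem _ _ hj]
    exact List.set_eq_take_cons_drop _ hj
  have hstep : stepGen l j = l[j].1 := by
    unfold stepGen; rw [List.getD_eq_getElem _ _ hj]
  have hcons : ∀ (s : Gen n × Bool) (m : List (Gen n × Bool)),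
      walkMap D θ (s :: m) = (if s.2 = true then sgen D θ s.1 else id) ∘ walkMap D θ m := by
    intro s m
    rw [show s :: m = [s] ++ m from rfl, walkMap_append, walkMap_singleton]
  funext x
  by_cases hb : l[j].2 = true
  · -- crossing becomes fold
    have h1 : walkMap D θ l x = walkMap D θ (l.take j)
        (sgen D θ (stepGen l j) (walkMap D θ (l.drop (j+1)) x)) := by
      conv_lhs => rw [hl]
      rw [walkMap_append, hcons]
      simp [hb, hstep]
    have h2 : walkMap D θ (flipAt l j) x
        = walkMap D θ (l.take j) (walkMap D θ (l.drop (j+1)) x) := by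
      rw [hfl, walkMap_append, hcons]
      simp [hb]
    rw [h2, Function.comp_apply, h1, conj_walk D θ hθ]
    rw [aref_invol _ (wallRoot_ne_zero D θ hθ l j)]
  · -- fold becomes crossing
    have h1 : walkMap D θ l x = walkMap D θ (l.take j) (walkMap D θ (l.drop (j+1)) x) := by
      conv_lhs => rw [hl]
      rw [walkMap_append, hcons]
      simp [hb]
    have h2 : walkMap D θ (flipAt l j) x
        = walkMap D θ (l.take j)
            (sgen D θ (stepGen l j) (walkMap D θ (l.drop (j+1)) x)) := by
      rw [hfl, walkMap_append, hcons]
      simp [hb, hstep]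
    rw [h2, conj_walk D θ hθ, Function.comp_apply, h1]

lemma walkMap_take_flipAt (hθ : θ ∈ D.Rpos) (l : List (Gen n × Bool)) {j m : ℕ}
    (hj : j < l.length) (hjm : j < m) :
    walkMap D θ ((flipAt l j).take m)
      = aref (wallRoot D θ l j) (wallConst D θ l j) ∘ walkMap D θ (l.take m) := by
  rw [take_flipAt_gt l hjm]
  rw [walkMap_flipAt D θ hθ (l.take m) j (by simp [List.length_take]; omega)]
  rw [wallRoot_take D θ l hjm, wallConst_take D θ l hjm]

end P6
section P7
variable {n : ℕ} (D : RSData V n) (θ : V)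

lemma int_window_pos {u u' : ℝ} (hu : 0 < u ∧ u < 1) (hu' : 0 < u' ∧ u' < 1) (N : ℝ)
    (hN : ∃ z : ℤ, N = (z : ℝ)) : (0 < u + N ↔ 0 < u' + N) := by
  obtain ⟨z, rfl⟩ := hN
  rcases le_or_gt 0 z with h | h
  · have h' : (0:ℝ) ≤ z := by exact_mod_cast h
    constructor <;> intro <;> linarith [hu.1, hu'.1]
  · have h'' : z ≤ -1 := by omega
    have h' : (z:ℝ) ≤ -1 := by exact_mod_cast h''
    constructor <;> intro <;> linarith [hu.2, hu'.2]

lemma int_window_neg {u u' : ℝ} (hu : 0 < u ∧ u < 1) (hu' : 0 < u' ∧ u' < 1) (N : ℝ)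
    (hN : ∃ z : ℤ, N = (z : ℝ)) : (0 < -u + N ↔ 0 < -u' + N) := by
  obtain ⟨z, rfl⟩ := hN
  rcases le_or_gt 1 z with h | h
  · have h' : (1:ℝ) ≤ z := by exact_mod_cast h
    constructor <;> intro <;> linarith [hu.2, hu'.2]
  · have h'' : z ≤ 0 := by omega
    have h' : (z:ℝ) ≤ 0 := by exact_mod_cast h''
    constructor <;> intro <;> linarith [hu.1, hu'.1]

lemma walk_inner_decomp (hθ : θ ∈ D.Rpos) (l : List (Gen n × Bool)) (γ : V) (y : V) :
    ⟪walkMap D θ l y, γ⟫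
      = ⟪y, (affWalk D θ hθ l).Linv γ⟫ + ⟪(affWalk D θ hθ l).t, γ⟫ := by
  set A := affWalk D θ hθ l
  rw [A.map_eq, inner_add_left, A.inner_L_left]

lemma walk_nonint (hθ : θ ∈ D.Rpos) (p₀ : V)
    (hp₀ : ∀ α ∈ D.Rpos, 0 < ⟪p₀, α⟫ ∧ ⟪p₀, α⟫ < 1)
    (l : List (Gen n × Bool)) (γ : V) (hγ : γ ∈ D.Rpos) (m : ℝ)
    (hm : ∃ z : ℤ, m = (z : ℝ)) : ⟪walkMap D θ l p₀, γ⟫ + m ≠ 0 := by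
  obtain ⟨z, rfl⟩ := hm
  rw [walk_inner_decomp D θ hθ]
  set A := affWalk D θ hθ l
  obtain ⟨zT, hzT⟩ := A.t_int γ hγ
  rcases A.linv_root_pm γ hγ with h | h
  · have hu := hp₀ _ h
    rw [hzT]
    intro hc
    have h1 : ⟪p₀, A.Linv γ⟫ = -((zT : ℝ) + z) := by linarith
    have h2 : ∃ w : ℤ, ⟪p₀, A.Linv γ⟫ = (w:ℝ) := ⟨-(zT + z), by rw [h1]; push_cast; ring⟩
    obtain ⟨w, hw⟩ := h2
    rw [hw] at hu
    have h3 : 0 < w := by exact_mod_cast hu.1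
    have h4 : w < 1 := by exact_mod_cast hu.2
    omega
  · have hu := hp₀ _ h
    rw [hzT]
    intro hc
    have h1 : ⟪p₀, -(A.Linv γ)⟫ = (zT : ℝ) + z := by
      rw [inner_neg_right]; linarith
    rw [h1] at hu
    have h3' : 0 < zT + z := by exact_mod_cast hu.1
    have h4' : zT + z < 1 := by exact_mod_cast hu.2
    omega

lemma FA_step (hθ : θ ∈ D.Rpos)
    (hθhigh : ∀ β ∈ D.Rpos, ∃ c : Fin n → ℝ, (∀ i, 0 ≤ c i) ∧ θ - β = ∑ i, c i • D.simple i)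
    (p₀ : V) (hp₀ : ∀ α ∈ D.Rpos, 0 < ⟪p₀, α⟫ ∧ ⟪p₀, α⟫ < 1)
    (g : Gen n) (δ : V) (hδ : δ ∈ D.Rpos) (hne : δ ≠ genRoot D θ g) :
    0 < ⟪sgen D θ g p₀, δ⟫ ∧ ⟪sgen D θ g p₀, δ⟫ < 1 := by
  have hval : ∀ (G : V) (k : ℝ), ⟪aref G k p₀, δ⟫
      = ⟪p₀, δ⟫ - (⟪p₀, G⟫ + k) * ⟪δ, coroot' G⟫ := by
    intro G k
    rw [aref_apply, inner_sub_left, real_inner_smul_left, real_inner_comm (coroot' G) δ]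
  cases g with
  | some idx =>
    have hG : genRoot D θ (some idx) = D.simple idx := rfl
    rw [hG] at hne
    have hmain : ⟪sgen D θ (some idx) p₀, δ⟫ = ⟪p₀, sref (D.simple idx) δ⟫ := by
      show ⟪aref (D.simple idx) ((genK (some idx) : ℤ) : ℝ) p₀, δ⟫ = _
      rw [hval]
      rw [sref_eq_sub_smul, inner_sub_right, real_inner_smul_right]
      have : ⟪p₀, D.simple idx⟫ * ⟪δ, coroot' (D.simple idx)⟫
          = ⟪δ, coroot' (D.simple idx)⟫ * ⟪p₀, D.simple idx⟫ := by ring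
      simp [genK, this]
    rw [hmain]
    exact hp₀ _ (simple_refl_pos D idx δ hδ hne)
  | none =>
    have hG : genRoot D θ none = θ := rfl
    rw [hG] at hne
    have hk : ((genK (none : Gen n) : ℤ) : ℝ) = -1 := by simp [genK]
    have hv : ⟪sgen D θ none p₀, δ⟫
        = ⟪p₀, δ⟫ - (⟪p₀, θ⟫ - 1) * ⟪δ, coroot' θ⟫ := by
      show ⟪aref θ ((genK (none : Gen n) : ℤ) : ℝ) p₀, δ⟫ = _
      rw [hval, hk]
      ring_nf
    rcases z_theta D θ hθ hθhigh δ hδ hne with h0 | ⟨h1, hmem⟩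
    · rw [hv, h0]
      simpa using hp₀ δ hδ
    · rw [hv, h1]
      have h2 := hp₀ _ hmem
      rw [inner_sub_right] at h2
      have h3 := hp₀ δ hδ
      constructor <;> [nlinarith [h2.2]; nlinarith [h2.1]]

lemma walkMap_take_succ (l : List (Gen n × Bool)) {j : ℕ} (hj : j < l.length) (x : V) :
    walkMap D θ (l.take (j+1)) x
      = if crossAt l j then walkMap D θ (l.take j) (sgen D θ (stepGen l j) x)
        else walkMap D θ (l.take j) x := by
  have h1 : l.take (j+1) = l.take j ++ [l[j]] := by
    rw [List.take_succ, List.getElem?_eq_getElem hj]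
    rfl
  have hst : stepGen l j = l[j].1 := by
    unfold stepGen; rw [List.getD_eq_getElem _ _ hj]
  have hcr : crossAt l j ↔ l[j].2 = true := by
    unfold crossAt; rw [List.getD_eq_getElem _ _ hj]
  rw [h1, walkMap_append, walkMap_singleton]
  by_cases hb : l[j].2 = true
  · rw [if_pos (hcr.mpr hb), if_pos hb, hst]
    rfl
  · rw [if_neg (fun hc => hb (hcr.mp hc)), if_neg hb]
    rfl

lemma cross_level (hθ : θ ∈ D.Rpos)
    (hθhigh : ∀ β ∈ D.Rpos, ∃ c : Fin n → ℝ, (∀ i, 0 ≤ c i) ∧ θ - β = ∑ i, c i • D.simple i)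
    (p₀ : V) (hp₀ : ∀ α ∈ D.Rpos, 0 < ⟪p₀, α⟫ ∧ ⟪p₀, α⟫ < 1)
    (l : List (Gen n × Bool)) (j : ℕ) (i : Fin n)
    (hroot : wallRoot D θ l j ≠ D.simple i) (M : ℝ) (hM : ∃ z : ℤ, M = (z : ℝ)) :
    (0 < ⟪walkMap D θ (l.take j) (sgen D θ (stepGen l j) p₀), D.simple i⟫ + M
      ↔ 0 < ⟪walkMap D θ (l.take j) p₀, D.simple i⟫ + M) := by
  set α := D.simple i with hα
  have hαmem : α ∈ D.Rpos := D.hsimple i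
  set A := affWalk D θ hθ (l.take j) with hA
  obtain ⟨zT, hzT⟩ := A.t_int α hαmem
  have hdecomp : ∀ y : V, ⟪walkMap D θ (l.take j) y, α⟫ = ⟪y, A.Linv α⟫ + (zT : ℝ) := by
    intro y
    rw [walk_inner_decomp D θ hθ, ← hzT]
  have hdir := wallDir_eq_L D θ hθ l j
  have hδg : ∀ δ : V, (A.Linv α = δ ∨ A.Linv α = -δ) → δ ≠ genRoot D θ (stepGen l j) := by
    intro δ hcase hgd
    apply hroot
    have hLδ : wallDir D θ l j = α ∨ wallDir D θ l j = -α := by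
      rw [hdir, ← hgd]
      rcases hcase with h | h
      · left; rw [← h, A.L_linv]
      · right
        rw [show δ = -(A.Linv α) from by rw [h]; simp, A.L_neg, A.L_linv]
    unfold wallRoot
    rcases hLδ with h | h
    · rw [h]; rw [if_pos hαmem]
    · rw [h]; rw [if_neg (by simpa using D.hdisj α hαmem)]; simp
  rcases A.linv_root_pm α hαmem with h | h
  · set δ := A.Linv α
    have hu : 0 < ⟪p₀, δ⟫ ∧ ⟪p₀, δ⟫ < 1 := hp₀ _ h
    have hu' := FA_step D θ hθ hθhigh p₀ hp₀ (stepGen l j) δ h (hδg δ (Or.inl rfl))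
    rw [hdecomp, hdecomp]
    have hN : ∃ z : ℤ, (zT : ℝ) + M = (z : ℝ) := by
      obtain ⟨z, rfl⟩ := hM; exact ⟨zT + z, by push_cast; ring⟩
    have := int_window_pos hu' hu ((zT : ℝ) + M) hN
    constructor <;> intro hh
    · have : 0 < ⟪sgen D θ (stepGen l j) p₀, δ⟫ + ((zT:ℝ) + M) := by linarith
      have h2 := (int_window_pos hu' hu ((zT : ℝ) + M) hN).mp this
      linarith
    · have : 0 < ⟪p₀, δ⟫ + ((zT:ℝ) + M) := by linarith
      have h2 := (int_window_pos hu' hu ((zT : ℝ) + M) hN).mpr this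
      linarith
  · set δ := -(A.Linv α) with hδ
    have hmem' : δ ∈ D.Rpos := h
    have hu : 0 < ⟪p₀, δ⟫ ∧ ⟪p₀, δ⟫ < 1 := hp₀ _ hmem'
    have hu' := FA_step D θ hθ hθhigh p₀ hp₀ (stepGen l j) δ hmem'
      (hδg δ (Or.inr (by rw [hδ]; simp)))
    rw [hdecomp, hdecomp]
    have hN : ∃ z : ℤ, (zT : ℝ) + M = (z : ℝ) := by
      obtain ⟨z, rfl⟩ := hM; exact ⟨zT + z, by push_cast; ring⟩
    have hrw : ∀ y : V, ⟪y, A.Linv α⟫ = -⟪y, δ⟫ := by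
      intro y; rw [hδ]; simp
    rw [hrw, hrw]
    constructor <;> intro hh
    · have : 0 < -⟪sgen D θ (stepGen l j) p₀, δ⟫ + ((zT:ℝ) + M) := by linarith
      have h2 := (int_window_neg hu' hu ((zT : ℝ) + M) hN).mp this
      linarith
    · have : 0 < -⟪p₀, δ⟫ + ((zT:ℝ) + M) := by linarith
      have h2 := (int_window_neg hu' hu ((zT : ℝ) + M) hN).mpr this
      linarith
end P7
section P8
variable {n : ℕ} (D : RSData V n) (θ : V)

lemma no_alpha_wall (hθ : θ ∈ D.Rpos)
    (hθhigh : ∀ β ∈ D.Rpos, ∃ c : Fin n → ℝ, (∀ i, 0 ≤ c i) ∧ θ - β = ∑ i, c i • D.simple i)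
    (p₀ : V) (hp₀ : ∀ α ∈ D.Rpos, 0 < ⟪p₀, α⟫ ∧ ⟪p₀, α⟫ < 1)
    (steps : List (Gen n × Bool)) (hpf : PosFolded D θ p₀ steps)
    (i : Fin n) (j₀ : ℕ) (k₀ : ℤ)
    (hcrit : IsCritical D θ p₀ steps (D.simple i) j₀ k₀)
    (J : ℕ) (hJ : J ≤ steps.length)
    (hnoint : ∀ j, j₀ < j → j < J → ¬ (FoldAbove D θ p₀ steps (D.simple i) k₀ j ∨
        PosCrossOn D θ p₀ steps (D.simple i) k₀ j))
    (j : ℕ) (hj0 : j₀ < j) (hjJ : j < J)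
    (hf : -1 < ⟪walkMap D θ (steps.take j) p₀, D.simple i⟫ + (k₀ : ℝ)
        ∧ ⟪walkMap D θ (steps.take j) p₀, D.simple i⟫ + (k₀ : ℝ) < 0) :
    wallRoot D θ steps j ≠ D.simple i := by
  intro hroot
  set e := ⟪walkMap D θ (steps.take j) p₀, D.simple i⟫ with he
  obtain ⟨zc, hzc⟩ := wallConst_int D θ hθ steps j
  have hside : sideAt D θ p₀ steps j = e + (zc : ℝ) := by
    unfold sideAt
    rw [hroot, hzc, he]
  obtain ⟨⟨hb1, hb2⟩, hb0⟩ := sideAt_bounds D θ hθ hθhigh p₀ hp₀ steps j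
  have hjlen : j < steps.length := lt_of_lt_of_le hjJ hJ
  have hd : zc = k₀ ∨ zc = k₀ + 1 := by
    rw [hside] at hb1 hb2
    have h1 : -1 < (zc:ℝ) - k₀ := by linarith [hf.2]
    have h2 : (zc:ℝ) - k₀ < 2 := by linarith [hf.1]
    have h1' : -1 < zc - k₀ := by
      have hx : (-1:ℝ) < ((zc - k₀ : ℤ) : ℝ) := by push_cast; linarith
      exact_mod_cast hx
    have h2' : zc - k₀ < 2 := by
      have hx : ((zc - k₀ : ℤ) : ℝ) < 2 := by push_cast; linarith
      exact_mod_cast hx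
    omega
  by_cases hc : crossAt steps j
  · rcases hd with hd | hd
    · -- positive crossing of the critical hyperplane
      apply hnoint j hj0 hjJ
      right
      refine ⟨hjlen, hc, ?_, hroot, by rw [hzc, hd]⟩
      rw [hside, hd]
      push_cast
      linarith [hf.2]
    · -- negative crossing of a higher hyperplane: contradicts maximality
      have hneg : negCrossOn D θ p₀ steps (D.simple i) (k₀ + 1) j := by
        refine ⟨hjlen, hc, ?_, hroot, by rw [hzc, hd]⟩
        rw [hside, hd]
        push_cast; linarith [hf.1]
      have := hcrit.2.1 j (k₀ + 1) hneg
      omega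
  · rcases hd with hd | hd
    · -- fold on critical hyperplane from below: contradicts positive foldedness
      have := hpf j hjlen hc
      rw [hside, hd] at this
      push_cast at this
      linarith [hf.2]
    · -- fold above
      exact hnoint j hj0 hjJ (Or.inl ⟨hjlen, hc, hroot, by rw [hzc, hd]⟩)

lemma strip_lemma (hθ : θ ∈ D.Rpos)
    (hθhigh : ∀ β ∈ D.Rpos, ∃ c : Fin n → ℝ, (∀ i, 0 ≤ c i) ∧ θ - β = ∑ i, c i • D.simple i)
    (p₀ : V) (hp₀ : ∀ α ∈ D.Rpos, 0 < ⟪p₀, α⟫ ∧ ⟪p₀, α⟫ < 1)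
    (steps : List (Gen n × Bool)) (hpf : PosFolded D θ p₀ steps)
    (i : Fin n) (j₀ : ℕ) (k₀ : ℤ)
    (hcrit : IsCritical D θ p₀ steps (D.simple i) j₀ k₀)
    (J : ℕ) (hJ : J ≤ steps.length)
    (hnoint : ∀ j, j₀ < j → j < J → ¬ (FoldAbove D θ p₀ steps (D.simple i) k₀ j ∨
        PosCrossOn D θ p₀ steps (D.simple i) k₀ j)) :
    ∀ j, j₀ + 1 ≤ j → j ≤ J →
      -1 < ⟪walkMap D θ (steps.take j) p₀, D.simple i⟫ + (k₀ : ℝ)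
        ∧ ⟪walkMap D θ (steps.take j) p₀, D.simple i⟫ + (k₀ : ℝ) < 0 := by
  set α := D.simple i with hα
  have hαnz : α ≠ 0 := D.hnz α (D.hsimple i)
  obtain ⟨hj₀len, hcross₀, hpos₀, hroot₀, hconst₀⟩ := hcrit.1
  intro j hj1
  induction j, hj1 using Nat.le_induction with
  | base =>
    intro hJ'
    have h1 := walkMap_take_succ D θ steps hj₀len p₀
    rw [if_pos hcross₀] at h1
    rw [h1, conj_walk D θ hθ, hroot₀, hconst₀]
    rw [inner_aref α hαnz]
    have hs : sideAt D θ p₀ steps j₀ = ⟪walkMap D θ (steps.take j₀) p₀, α⟫ + (k₀:ℝ) := by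
      unfold sideAt; rw [hroot₀, hconst₀]
    obtain ⟨⟨hb1, hb2⟩, hb0⟩ := sideAt_bounds D θ hθ hθhigh p₀ hp₀ steps j₀
    rw [hs] at hb2 hpos₀
    constructor <;> linarith
  | succ j hj ih =>
    intro hJ'
    have hjJ : j < J := by omega
    have hf := ih (le_of_lt hjJ)
    have hjlen : j < steps.length := lt_of_lt_of_le hjJ hJ
    have h1 := walkMap_take_succ D θ steps hjlen p₀
    by_cases hc : crossAt steps j
    · rw [if_pos hc] at h1
      have hroot : wallRoot D θ steps j ≠ α :=
        no_alpha_wall D θ hθ hθhigh p₀ hp₀ steps hpf i j₀ k₀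
          ⟨⟨hj₀len, hcross₀, hpos₀, hroot₀, hconst₀⟩, hcrit.2⟩ J hJ hnoint j (by omega) hjJ hf
      have hiff1 := cross_level D θ hθ hθhigh p₀ hp₀ steps j i hroot (k₀ : ℝ) ⟨k₀, rfl⟩
      have hiff2 := cross_level D θ hθ hθhigh p₀ hp₀ steps j i hroot ((k₀:ℝ) + 1)
        ⟨k₀ + 1, by push_cast; ring⟩
      rw [← h1] at hiff1 hiff2
      have hne : ⟪walkMap D θ (steps.take (j+1)) p₀, α⟫ + (k₀:ℝ) ≠ 0 :=
        walk_nonint D θ hθ p₀ hp₀ (steps.take (j+1)) α (D.hsimple i) (k₀:ℝ) ⟨k₀, rfl⟩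
      constructor
      · have h2 : 0 < ⟪walkMap D θ (steps.take j) p₀, α⟫ + ((k₀:ℝ) + 1) := by
          linarith [hf.1]
        have h3 := hiff2.mpr h2
        linarith
      · have h2 : ¬ (0 < ⟪walkMap D θ (steps.take j) p₀, α⟫ + (k₀:ℝ)) := by
          linarith [hf.2]
        have h3 : ¬ (0 < ⟪walkMap D θ (steps.take (j+1)) p₀, α⟫ + (k₀:ℝ)) := fun hh =>
          h2 (hiff1.mp hh)
        rcases lt_trichotomy (⟪walkMap D θ (steps.take (j+1)) p₀, α⟫ + (k₀:ℝ)) 0 with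
          h | h | h
        · exact h
        · exact absurd h hne
        · exact absurd h h3
    · rw [if_neg hc] at h1
      rw [h1]
      exact hf
end P8
section P9
variable {n : ℕ} (D : RSData V n) (θ : V)

lemma wallDir_transport (l l' : List (Gen n × Bool)) (j : ℕ)
    (hg : stepGen l' j = stepGen l j) (β : V) (m : ℝ)
    (hw : walkMap D θ (l'.take j) = aref β m ∘ walkMap D θ (l.take j)) :
    wallDir D θ l' j = sref β (wallDir D θ l j) := by
  unfold wallDir
  rw [hg, hw]
  simp only [Function.comp_apply]
  exact aref_sub β m _ _

lemma wallDir_congr (l l' : List (Gen n × Bool)) (j : ℕ)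
    (hg : stepGen l' j = stepGen l j)
    (hw : walkMap D θ (l'.take j) = walkMap D θ (l.take j)) :
    wallDir D θ l' j = wallDir D θ l j := by
  unfold wallDir; rw [hg, hw]

lemma sideAt_congr (p₀ : V) (l l' : List (Gen n × Bool)) (j : ℕ)
    (hg : stepGen l' j = stepGen l j)
    (hw : walkMap D θ (l'.take j) = walkMap D θ (l.take j)) :
    sideAt D θ p₀ l' j = sideAt D θ p₀ l j := by
  unfold sideAt wallRoot wallConst wallDir
  rw [hg, hw]

lemma wallDir_transport_translation (l l' : List (Gen n × Bool)) (j : ℕ)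
    (hg : stepGen l' j = stepGen l j) (c : V)
    (hw : walkMap D θ (l'.take j) = fun x => walkMap D θ (l.take j) x + c) :
    wallDir D θ l' j = wallDir D θ l j := by
  unfold wallDir
  rw [hg, hw]
  simp only [add_sub_add_right_eq_sub]

lemma sideAt_transport_translation (hθ : θ ∈ D.Rpos) (p₀ : V)
    (l l' : List (Gen n × Bool)) (j : ℕ)
    (hg : stepGen l' j = stepGen l j) (c : V)
    (hw : walkMap D θ (l'.take j) = fun x => walkMap D θ (l.take j) x + c) :
    sideAt D θ p₀ l' j = sideAt D θ p₀ l j := by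
  rw [sideAt_eq D θ hθ, sideAt_eq D θ hθ, hg]
  congr 1
  unfold wsign
  rw [wallDir_transport_translation D θ l l' j hg c hw]

lemma wsign_transport_ne (hθ : θ ∈ D.Rpos) (i : Fin n) (l l' : List (Gen n × Bool)) (j : ℕ)
    (hg : stepGen l' j = stepGen l j) (m : ℝ)
    (hw : walkMap D θ (l'.take j) = aref (D.simple i) m ∘ walkMap D θ (l.take j))
    (hroot : wallRoot D θ l j ≠ D.simple i) :
    wsign D θ l' j = wsign D θ l j := by
  have hdir := wallDir_transport D θ l l' j hg (D.simple i) m hw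
  unfold wsign
  rw [hdir]
  by_cases h : wallDir D θ l j ∈ D.Rpos
  · have hR : wallRoot D θ l j = wallDir D θ l j := by unfold wallRoot; rw [if_pos h]
    have hmem : sref (D.simple i) (wallDir D θ l j) ∈ D.Rpos :=
      simple_refl_pos D i _ h (by rw [← hR]; exact hroot)
    rw [if_pos hmem, if_pos h]
  · have hR : wallRoot D θ l j = -wallDir D θ l j := by unfold wallRoot; rw [if_neg h]
    have hmem : -wallDir D θ l j ∈ D.Rpos := by
      have := wallRoot_mem D θ hθ l j
      rwa [hR] at this
    have hne : -wallDir D θ l j ≠ D.simple i := by rw [← hR]; exact hroot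
    have hpos : sref (D.simple i) (-wallDir D θ l j) ∈ D.Rpos :=
      simple_refl_pos D i _ hmem hne
    have hrw : sref (D.simple i) (wallDir D θ l j)
        = -(sref (D.simple i) (-wallDir D θ l j)) := by
      rw [show sref (D.simple i) (-wallDir D θ l j)
          = -(sref (D.simple i) (wallDir D θ l j)) from by
        simpa using map_neg ((sref_linear (D.simple i)).mk' _) (wallDir D θ l j)]
      simp
    rw [if_neg h, if_neg (by rw [hrw]; exact D.hdisj _ hpos)]

lemma sideAt_transport_ne (hθ : θ ∈ D.Rpos) (p₀ : V) (i : Fin n)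
    (l l' : List (Gen n × Bool)) (j : ℕ)
    (hg : stepGen l' j = stepGen l j) (m : ℝ)
    (hw : walkMap D θ (l'.take j) = aref (D.simple i) m ∘ walkMap D θ (l.take j))
    (hroot : wallRoot D θ l j ≠ D.simple i) :
    sideAt D θ p₀ l' j = sideAt D θ p₀ l j := by
  rw [sideAt_eq D θ hθ, sideAt_eq D θ hθ, hg,
    wsign_transport_ne D θ hθ i l l' j hg m hw hroot]

lemma special_transport (hθ : θ ∈ D.Rpos) (p₀ : V) (i : Fin n)
    (l l' : List (Gen n × Bool)) (j : ℕ)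
    (hg : stepGen l' j = stepGen l j) (m₀ : ℝ)
    (hw : walkMap D θ (l'.take j) = aref (D.simple i) m₀ ∘ walkMap D θ (l.take j))
    (hroot : wallRoot D θ l j = D.simple i) :
    wallRoot D θ l' j = D.simple i
      ∧ wallConst D θ l' j = 2 * m₀ - wallConst D θ l j
      ∧ sideAt D θ p₀ l' j = -sideAt D θ p₀ l j := by
  set α := D.simple i with hα
  have hαnz : α ≠ 0 := D.hnz α (D.hsimple i)
  have hαmem : α ∈ D.Rpos := D.hsimple i
  have hdir := wallDir_transport D θ l l' j hg α m₀ hw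
  have hdirpm : wallDir D θ l j = α ∨ wallDir D θ l j = -α := by
    unfold wallRoot at hroot
    split_ifs at hroot with h
    · left; exact hroot
    · right; rw [← hroot]; simp
  have hkey : (wallDir D θ l' j = -α ∧ wallDir D θ l j = α)
      ∨ (wallDir D θ l' j = α ∧ wallDir D θ l j = -α) := by
    rcases hdirpm with h | h
    · left; exact ⟨by rw [hdir, h, sref_self α hαnz], h⟩
    · right
      refine ⟨?_, h⟩
      rw [hdir, h]
      rw [show sref α (-α) = -(sref α α) from by
        simpa using map_neg ((sref_linear α).mk' _) α]
      rw [sref_self α hαnz]; simp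
  have hwsign : wsign D θ l' j = -wsign D θ l j ∧ wallRoot D θ l' j = α := by
    unfold wsign wallRoot
    rcases hkey with ⟨h1, h2⟩ | ⟨h1, h2⟩
    · rw [h1, h2, if_pos hαmem, if_neg (D.hdisj α hαmem)]
      norm_num
      exact fun h => absurd h (D.hdisj α hαmem)
    · rw [h1, h2, if_pos hαmem, if_neg (D.hdisj α hαmem)]
      norm_num
      exact fun h => absurd hαmem h
  refine ⟨hwsign.2, ?_, ?_⟩
  · have hf := side_formula D θ hθ l j 0
    have hf' := side_formula D θ hθ l' j 0
    rw [inner_zero_left] at hf hf'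
    rw [hroot] at hf
    rw [hwsign.2] at hf'
    rw [hg, hwsign.1] at hf'
    have h0' : walkMap D θ (l'.take j) 0 = aref α m₀ (walkMap D θ (l.take j) 0) := by
      rw [hw]; rfl
    rw [h0', inner_aref α hαnz] at hf'
    linarith [hf, hf']
  · rw [sideAt_eq D θ hθ, sideAt_eq D θ hθ, hg, hwsign.1]
    ring

lemma walkDim_eq_card (p₀ : V) (l : List (Gen n × Bool)) :
    walkDim D θ p₀ l = ((Finset.range l.length).filter
      (fun j => (crossAt l j ∧ sideAt D θ p₀ l j < 0) ∨ ¬ crossAt l j)).card := by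
  unfold walkDim numPosCross numFolds
  rw [Finset.filter_or, Finset.card_union_of_disjoint]
  rw [Finset.disjoint_left]
  intro a ha ha'
  rw [Finset.mem_filter] at ha ha'
  exact ha'.2 ha.2.1

lemma dim_succ (p₀ : V) (l l' : List (Gen n × Bool)) (hlen : l'.length = l.length)
    (j₀ : ℕ) (hj₀ : j₀ < l.length)
    (hsame : ∀ j, j < l.length → j ≠ j₀ →
      (((crossAt l' j ∧ sideAt D θ p₀ l' j < 0) ∨ ¬ crossAt l' j)
        ↔ ((crossAt l j ∧ sideAt D θ p₀ l j < 0) ∨ ¬ crossAt l j)))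
    (hold : ¬ ((crossAt l j₀ ∧ sideAt D θ p₀ l j₀ < 0) ∨ ¬ crossAt l j₀))
    (hnew : (crossAt l' j₀ ∧ sideAt D θ p₀ l' j₀ < 0) ∨ ¬ crossAt l' j₀) :
    walkDim D θ p₀ l' = walkDim D θ p₀ l + 1 := by
  rw [walkDim_eq_card, walkDim_eq_card, hlen]
  have hset : (Finset.range l.length).filter
      (fun j => (crossAt l' j ∧ sideAt D θ p₀ l' j < 0) ∨ ¬ crossAt l' j)
      = insert j₀ ((Finset.range l.length).filter
        (fun j => (crossAt l j ∧ sideAt D θ p₀ l j < 0) ∨ ¬ crossAt l j)) := by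
    ext j
    rw [Finset.mem_insert, Finset.mem_filter, Finset.mem_filter, Finset.mem_range]
    constructor
    · intro ⟨h1, h2⟩
      by_cases hj : j = j₀
      · exact Or.inl hj
      · exact Or.inr ⟨h1, (hsame j h1 hj).mp h2⟩
    · intro h
      rcases h with h | ⟨h1, h2⟩
      · subst h; exact ⟨hj₀, hnew⟩
      · by_cases hj : j = j₀
        · subst hj; exact absurd h2 hold
        · exact ⟨h1, (hsame j h1 hj).mpr h2⟩
  rw [hset, Finset.card_insert_of_notMem]
  rw [Finset.mem_filter]
  intro ⟨_, h⟩
  exact hold h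
end P9

/-- If `p` is a positively folded alcove walk and the raising root
operator `ẽ_i` applied to `p` is nonzero (i.e. `p` has an `i`-critical crossing, at
position `j₀`, on the `i`-critical hyperplane `H_{α_i+k₀δ}`), then `ẽ_i(p)` is again
positively folded and `dim(ẽ_i(p)) = dim(p) + 1`; moreover `end(ẽ_i(p))` equals
`t_{α_i^∨}·end(p)`, `end(p)`, or `s_γ·end(p)` according to whether `ẽ_i` acts by case
(a) (the first later interaction with the strip is a fold on `H_{γ+δ}`), case (b) (it is
a positive crossing of `H_γ`), or case (c) (there is no later interaction).  In cases
(a) and (b) the operator toggles positions `j₀` and `j₁`; in case (c) it toggles `j₀`. -/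
theorem root_operator_properties {n : ℕ} (D : RSData V n) (θ : V)
    (hθ : θ ∈ D.Rpos)
    (hθhigh : ∀ β ∈ D.Rpos, ∃ c : Fin n → ℝ, (∀ i, 0 ≤ c i) ∧
      θ - β = ∑ i, c i • D.simple i)
    (p₀ : V) (hp₀ : ∀ α ∈ D.Rpos, 0 < ⟪p₀, α⟫ ∧ ⟪p₀, α⟫ < 1)
    (steps : List (Gen n × Bool)) (hpf : PosFolded D θ p₀ steps)
    (i : Fin n) (j₀ : ℕ) (k₀ : ℤ)
    (hcrit : IsCritical D θ p₀ steps (D.simple i) j₀ k₀) :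
    -- case (a)
    (∀ j₁, j₀ < j₁ → FoldAbove D θ p₀ steps (D.simple i) k₀ j₁ →
      (∀ j, j₀ < j → j < j₁ → ¬ (FoldAbove D θ p₀ steps (D.simple i) k₀ j ∨
        PosCrossOn D θ p₀ steps (D.simple i) k₀ j)) →
      (PosFolded D θ p₀ (flipAt (flipAt steps j₀) j₁) ∧
        walkDim D θ p₀ (flipAt (flipAt steps j₀) j₁) = walkDim D θ p₀ steps + 1 ∧
        ∀ x, walkMap D θ (flipAt (flipAt steps j₀) j₁) x
            = walkMap D θ steps x + coroot' (D.simple i))) ∧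
    -- case (b)
    (∀ j₁, j₀ < j₁ → PosCrossOn D θ p₀ steps (D.simple i) k₀ j₁ →
      (∀ j, j₀ < j → j < j₁ → ¬ (FoldAbove D θ p₀ steps (D.simple i) k₀ j ∨
        PosCrossOn D θ p₀ steps (D.simple i) k₀ j)) →
      (PosFolded D θ p₀ (flipAt (flipAt steps j₀) j₁) ∧
        walkDim D θ p₀ (flipAt (flipAt steps j₀) j₁) = walkDim D θ p₀ steps + 1 ∧
        ∀ x, walkMap D θ (flipAt (flipAt steps j₀) j₁) x = walkMap D θ steps x)) ∧
    -- case (c)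
    ((∀ j, j₀ < j → ¬ (FoldAbove D θ p₀ steps (D.simple i) k₀ j ∨
        PosCrossOn D θ p₀ steps (D.simple i) k₀ j)) →
      (PosFolded D θ p₀ (flipAt steps j₀) ∧
        walkDim D θ p₀ (flipAt steps j₀) = walkDim D θ p₀ steps + 1 ∧
        ∀ x, walkMap D θ (flipAt steps j₀) x
            = aref (D.simple i) ((k₀ : ℤ) : ℝ) (walkMap D θ steps x))) := by
  obtain ⟨⟨hj₀len, hcross₀, hpos₀, hroot₀, hconst₀⟩, hmax, hfirst⟩ := hcrit
  have hcrit' : IsCritical D θ p₀ steps (D.simple i) j₀ k₀ :=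
    ⟨⟨hj₀len, hcross₀, hpos₀, hroot₀, hconst₀⟩, hmax, hfirst⟩
  have hαnz : D.simple i ≠ 0 := D.hnz _ (D.hsimple i)
  have hrootne : ∀ J, J ≤ steps.length →
      (∀ j, j₀ < j → j < J → ¬ (FoldAbove D θ p₀ steps (D.simple i) k₀ j ∨
        PosCrossOn D θ p₀ steps (D.simple i) k₀ j)) →
      ∀ j, j₀ < j → j < J → wallRoot D θ steps j ≠ D.simple i := by
    intro J hJ hno j h1 h2
    exact no_alpha_wall D θ hθ hθhigh p₀ hp₀ steps hpf i j₀ k₀ hcrit' J hJ hno j h1 h2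
      (strip_lemma D θ hθ hθhigh p₀ hp₀ steps hpf i j₀ k₀ hcrit' J hJ hno j (by omega)
        (le_of_lt h2))
  have hW1 : ∀ m, j₀ < m → walkMap D θ ((flipAt steps j₀).take m)
      = aref (D.simple i) ((k₀ : ℤ) : ℝ) ∘ walkMap D θ (steps.take m) := by
    intro m hm
    rw [walkMap_take_flipAt D θ hθ steps hj₀len hm, hroot₀, hconst₀]
  have hW1full : walkMap D θ (flipAt steps j₀)
      = aref (D.simple i) ((k₀ : ℤ) : ℝ) ∘ walkMap D θ steps := by
    rw [walkMap_flipAt D θ hθ steps j₀ hj₀len, hroot₀, hconst₀]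
  have hQ₀old : ¬ ((crossAt steps j₀ ∧ sideAt D θ p₀ steps j₀ < 0) ∨ ¬ crossAt steps j₀) := by
    intro hcase
    rcases hcase with ⟨_, hlt⟩ | hnc
    · linarith
    · exact hnc hcross₀
  -- ===================== shared machinery for cases (a) and (b) =====================
  have mainAB : ∀ j₁, j₀ < j₁ → j₁ < steps.length →
      (∀ j, j₀ < j → j < j₁ → ¬ (FoldAbove D θ p₀ steps (D.simple i) k₀ j ∨
        PosCrossOn D θ p₀ steps (D.simple i) k₀ j)) →
      wallRoot D θ steps j₁ = D.simple i →
      (wallRoot D θ (flipAt steps j₀) j₁ = D.simple i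
        ∧ wallConst D θ (flipAt steps j₀) j₁
            = 2 * ((k₀ : ℤ) : ℝ) - wallConst D θ steps j₁
        ∧ sideAt D θ p₀ (flipAt steps j₀) j₁ = -sideAt D θ p₀ steps j₁)
      ∧ (∀ j, j < steps.length → j ≠ j₀ → j ≠ j₁ → j ≤ j₁ →
          sideAt D θ p₀ (flipAt (flipAt steps j₀) j₁) j = sideAt D θ p₀ steps j)
      ∧ sideAt D θ p₀ (flipAt (flipAt steps j₀) j₁) j₀ = sideAt D θ p₀ steps j₀
      ∧ sideAt D θ p₀ (flipAt (flipAt steps j₀) j₁) j₁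
          = -sideAt D θ p₀ steps j₁ := by
    intro j₁ hj₀j₁ hj₁len hno hroot₁
    have hne := hrootne j₁ (le_of_lt hj₁len) hno
    have hspec := special_transport D θ hθ p₀ i steps (flipAt steps j₀) j₁
      (stepGen_flipAt steps j₀ j₁) ((k₀ : ℤ) : ℝ) (hW1 j₁ hj₀j₁) hroot₁
    refine ⟨⟨hspec.1, hspec.2.1, hspec.2.2⟩, ?_, ?_, ?_⟩
    · intro j hj hjne₀ hjne₁ hjle
      have h1 : sideAt D θ p₀ (flipAt (flipAt steps j₀) j₁) j
          = sideAt D θ p₀ (flipAt steps j₀) j :=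
        sideAt_flipAt_le D θ p₀ (flipAt steps j₀) hjle
      rw [h1]
      rcases lt_or_gt_of_ne hjne₀ with h | h
      · exact sideAt_flipAt_le D θ p₀ steps (le_of_lt h)
      · exact sideAt_transport_ne D θ hθ p₀ i steps (flipAt steps j₀) j
          (stepGen_flipAt steps j₀ j) _ (hW1 j h) (hne j h (lt_of_le_of_ne hjle hjne₁))
    · rw [sideAt_flipAt_le D θ p₀ (flipAt steps j₀) (le_of_lt hj₀j₁)]
      exact sideAt_flipAt_le D θ p₀ steps le_rfl
    · rw [sideAt_flipAt_le D θ p₀ (flipAt steps j₀) le_rfl]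
      exact hspec.2.2
  refine ⟨?_, ?_, ?_⟩
  -- ===================== case (a) =====================
  · intro j₁ hj₀j₁ hfold hno
    obtain ⟨hj₁len, hnc₁, hroot₁, hconst₁⟩ := hfold
    have hside₁pos : 0 < sideAt D θ p₀ steps j₁ := hpf j₁ hj₁len hnc₁
    obtain ⟨⟨hspecR, hspecC, _⟩, hsides, hsidej₀, hsidej₁⟩ :=
      mainAB j₁ hj₀j₁ hj₁len hno hroot₁
    have hj₁lenF1 : j₁ < (flipAt steps j₀).length := by
      rw [length_flipAt]; exact hj₁len
    have hconstF1 : wallConst D θ (flipAt steps j₀) j₁ = ((k₀ : ℤ) : ℝ) - 1 := by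
      rw [hspecC, hconst₁]; push_cast; ring
    have hW2 : ∀ m, j₁ < m → walkMap D θ ((flipAt (flipAt steps j₀) j₁).take m)
        = fun x => walkMap D θ (steps.take m) x + coroot' (D.simple i) := by
      intro m hm
      rw [walkMap_take_flipAt D θ hθ (flipAt steps j₀) hj₁lenF1 hm, hspecR, hconstF1,
        hW1 m (lt_trans hj₀j₁ hm)]
      funext x
      simp only [Function.comp_apply]
      rw [aref_aref (D.simple i) hαnz]
      rw [show ((k₀:ℤ):ℝ) - (((k₀:ℤ):ℝ) - 1) = 1 by ring, one_smul]
    have hsides' : ∀ j, j < steps.length → j ≠ j₀ → j ≠ j₁ →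
        sideAt D θ p₀ (flipAt (flipAt steps j₀) j₁) j = sideAt D θ p₀ steps j := by
      intro j hj h0 h1
      rcases le_or_gt j j₁ with h | h
      · exact hsides j hj h0 h1 h
      · exact sideAt_transport_translation D θ hθ p₀ steps _ j
          (by rw [stepGen_flipAt, stepGen_flipAt]) _ (hW2 j h)
    have hcross' : ∀ j, j ≠ j₀ → j ≠ j₁ →
        (crossAt (flipAt (flipAt steps j₀) j₁) j ↔ crossAt steps j) := by
      intro j h0 h1
      rw [crossAt_flipAt_ne _ h1, crossAt_flipAt_ne _ h0]
    have hcrossj₀ : ¬ crossAt (flipAt (flipAt steps j₀) j₁) j₀ := by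
      rw [crossAt_flipAt_ne _ (Nat.ne_of_lt hj₀j₁), crossAt_flipAt_self steps hj₀len]
      exact fun h => h hcross₀
    have hcrossj₁ : crossAt (flipAt (flipAt steps j₀) j₁) j₁ := by
      rw [crossAt_flipAt_self _ hj₁lenF1, crossAt_flipAt_ne _ (Ne.symm (Nat.ne_of_lt hj₀j₁))]
      exact hnc₁
    refine ⟨?_, ?_, ?_⟩
    · intro j hj hnc
      rw [length_flipAt, length_flipAt] at hj
      by_cases h1 : j = j₁
      · subst h1; exact absurd hcrossj₁ hnc
      by_cases h0 : j = j₀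
      · subst h0; rw [hsidej₀]; exact hpos₀
      · rw [hsides' j hj h0 h1]
        exact hpf j hj (fun hc => hnc ((hcross' j h0 h1).mpr hc))
    · apply dim_succ D θ p₀ steps _ (by rw [length_flipAt, length_flipAt]) j₀ hj₀len
      · intro j hj hjne₀
        by_cases h1 : j = j₁
        · subst h1
          constructor
          · intro _; exact Or.inr hnc₁
          · intro _; exact Or.inl ⟨hcrossj₁, by rw [hsidej₁]; linarith⟩
        · rw [hsides' j hj hjne₀ h1,
            show crossAt (flipAt (flipAt steps j₀) j₁) j ↔ crossAt steps j from
              hcross' j hjne₀ h1]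
      · exact hQ₀old
      · exact Or.inr hcrossj₀
    · intro x
      have h := hW2 steps.length hj₁len
      rw [show (flipAt (flipAt steps j₀) j₁).take steps.length = flipAt (flipAt steps j₀) j₁
          from by
        rw [show steps.length = (flipAt (flipAt steps j₀) j₁).length from by
          rw [length_flipAt, length_flipAt]]
        exact List.take_length, List.take_length] at h
      rw [h]
  -- ===================== case (b) =====================
  · intro j₁ hj₀j₁ hposcr hno
    obtain ⟨hj₁len, hc₁, hsneg₁, hroot₁, hconst₁⟩ := hposcr
    obtain ⟨⟨hspecR, hspecC, _⟩, hsides, hsidej₀, hsidej₁⟩ :=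
      mainAB j₁ hj₀j₁ hj₁len hno hroot₁
    have hj₁lenF1 : j₁ < (flipAt steps j₀).length := by
      rw [length_flipAt]; exact hj₁len
    have hconstF1 : wallConst D θ (flipAt steps j₀) j₁ = ((k₀ : ℤ) : ℝ) := by
      rw [hspecC, hconst₁]; push_cast; ring
    have hW2 : ∀ m, j₁ < m → walkMap D θ ((flipAt (flipAt steps j₀) j₁).take m)
        = walkMap D θ (steps.take m) := by
      intro m hm
      rw [walkMap_take_flipAt D θ hθ (flipAt steps j₀) hj₁lenF1 hm, hspecR, hconstF1,
        hW1 m (lt_trans hj₀j₁ hm)]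
      funext x
      simp only [Function.comp_apply]
      exact aref_invol (D.simple i) hαnz _ _
    have hsides' : ∀ j, j < steps.length → j ≠ j₀ → j ≠ j₁ →
        sideAt D θ p₀ (flipAt (flipAt steps j₀) j₁) j = sideAt D θ p₀ steps j := by
      intro j hj h0 h1
      rcases le_or_gt j j₁ with h | h
      · exact hsides j hj h0 h1 h
      · exact sideAt_congr D θ p₀ steps _ j (by rw [stepGen_flipAt, stepGen_flipAt])
          (hW2 j h)
    have hcross' : ∀ j, j ≠ j₀ → j ≠ j₁ →
        (crossAt (flipAt (flipAt steps j₀) j₁) j ↔ crossAt steps j) := by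
      intro j h0 h1
      rw [crossAt_flipAt_ne _ h1, crossAt_flipAt_ne _ h0]
    have hcrossj₀ : ¬ crossAt (flipAt (flipAt steps j₀) j₁) j₀ := by
      rw [crossAt_flipAt_ne _ (Nat.ne_of_lt hj₀j₁), crossAt_flipAt_self steps hj₀len]
      exact fun h => h hcross₀
    have hcrossj₁ : ¬ crossAt (flipAt (flipAt steps j₀) j₁) j₁ := by
      rw [crossAt_flipAt_self _ hj₁lenF1,
        crossAt_flipAt_ne _ (Ne.symm (Nat.ne_of_lt hj₀j₁))]
      exact fun h => h hc₁
    refine ⟨?_, ?_, ?_⟩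
    · intro j hj hnc
      rw [length_flipAt, length_flipAt] at hj
      by_cases h1 : j = j₁
      · subst h1; rw [hsidej₁]; linarith
      by_cases h0 : j = j₀
      · subst h0; rw [hsidej₀]; exact hpos₀
      · rw [hsides' j hj h0 h1]
        exact hpf j hj (fun hc => hnc ((hcross' j h0 h1).mpr hc))
    · apply dim_succ D θ p₀ steps _ (by rw [length_flipAt, length_flipAt]) j₀ hj₀len
      · intro j hj hjne₀
        by_cases h1 : j = j₁
        · subst h1
          constructor
          · intro _; exact Or.inl ⟨hc₁, hsneg₁⟩
          · intro _; exact Or.inr hcrossj₁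
        · rw [hsides' j hj hjne₀ h1,
            show crossAt (flipAt (flipAt steps j₀) j₁) j ↔ crossAt steps j from
              hcross' j hjne₀ h1]
      · exact hQ₀old
      · exact Or.inr hcrossj₀
    · intro x
      have h := hW2 steps.length hj₁len
      rw [show (flipAt (flipAt steps j₀) j₁).take steps.length = flipAt (flipAt steps j₀) j₁
          from by
        rw [show steps.length = (flipAt (flipAt steps j₀) j₁).length from by
          rw [length_flipAt, length_flipAt]]
        exact List.take_length, List.take_length] at h
      rw [h]
  -- ===================== case (c) =====================
  · intro hno
    have hno' : ∀ j, j₀ < j → j < steps.length →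
        ¬ (FoldAbove D θ p₀ steps (D.simple i) k₀ j ∨
          PosCrossOn D θ p₀ steps (D.simple i) k₀ j) := fun j h1 _ => hno j h1
    have hne := hrootne steps.length le_rfl hno'
    have hsides : ∀ j, j < steps.length → j ≠ j₀ →
        sideAt D θ p₀ (flipAt steps j₀) j = sideAt D θ p₀ steps j := by
      intro j hj hjne
      rcases lt_or_gt_of_ne hjne with h | h
      · exact sideAt_flipAt_le D θ p₀ steps (le_of_lt h)
      · exact sideAt_transport_ne D θ hθ p₀ i steps (flipAt steps j₀) j
          (stepGen_flipAt steps j₀ j) _ (hW1 j h) (hne j h hj)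
    have hsidej₀ : sideAt D θ p₀ (flipAt steps j₀) j₀ = sideAt D θ p₀ steps j₀ :=
      sideAt_flipAt_le D θ p₀ steps le_rfl
    have hcross' : ∀ j, j ≠ j₀ → (crossAt (flipAt steps j₀) j ↔ crossAt steps j) :=
      fun j h => crossAt_flipAt_ne steps h
    have hcrossj₀ : ¬ crossAt (flipAt steps j₀) j₀ := by
      rw [crossAt_flipAt_self steps hj₀len]
      exact fun h => h hcross₀
    refine ⟨?_, ?_, ?_⟩
    · intro j hj hnc
      rw [length_flipAt] at hj
      by_cases h0 : j = j₀
      · subst h0; rw [hsidej₀]; exact hpos₀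
      · rw [hsides j hj h0]
        exact hpf j hj (fun hc => hnc ((hcross' j h0).mpr hc))
    · apply dim_succ D θ p₀ steps _ (length_flipAt steps j₀) j₀ hj₀len
      · intro j hj hjne₀
        rw [hsides j hj hjne₀,
          show crossAt (flipAt steps j₀) j ↔ crossAt steps j from hcross' j hjne₀]
      · exact hQ₀old
      · exact Or.inr hcrossj₀
    · intro x
      rw [hW1full]
      rfl
end
end

section
/- Let X be a thick building of irreducible type W whose Coxeter generators satisfy that every product s_i s_j has finite order. Then X is regular: for any two panels π, π′ of the same cotype, the set of chambers containing π is in bijection with the set of chambers containing π′. -/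
namespace Statement16

open List

open scoped Classical

variable {B W C : Type*} [Group W] {M : CoxeterMatrix B} (cs : CoxeterSystem M W)


open List

variable {B W : Type*} [Group W] {M : CoxeterMatrix B} (cs : CoxeterSystem M W)

/-! ### Alternating words -/

/-- The alternating word `[a, b, a, b, ...]` of length `r`, starting with `a`. -/
def myWord (a b : B) (r : ℕ) : List B := (List.range r).map (fun j => if Even j then a else b)

@[simp] lemma myWord_zero (a b : B) : myWord a b 0 = [] := rfl

@[simp] lemma myWord_one (a b : B) : myWord a b 1 = [a] := rfl

@[simp] lemma myWord_length (a b : B) (r : ℕ) : (myWord a b r).length = r := by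
  simp [myWord]

lemma myWord_cons (a b : B) (r : ℕ) : myWord a b (r + 1) = a :: myWord b a r := by
  simp only [myWord, List.range_succ_eq_map, List.map_cons, List.map_map,
    if_pos (Even.zero), List.cons.injEq, true_and]
  apply List.map_congr_left
  intro j _
  simp only [Function.comp_apply, Nat.succ_eq_add_one, Nat.even_add_one]
  by_cases h : Even j <;> simp [h]

lemma myWord_concat (a b : B) (r : ℕ) :
    myWord a b (r + 1) = myWord a b r ++ [if Even r then a else b] := by
  simp [myWord, List.range_succ]

lemma wordProd_myWord_cons (a b : B) (r : ℕ) :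
    cs.wordProd (myWord a b (r + 1)) = cs.simple a * cs.wordProd (myWord b a r) := by
  rw [myWord_cons, cs.wordProd_cons]

lemma wordProd_myWord_even (a b : B) (u : ℕ) :
    cs.wordProd (myWord a b (2 * u)) = (cs.simple a * cs.simple b) ^ u := by
  induction u with
  | zero => simp
  | succ u ih =>
    have h2 : 2 * (u + 1) = (2 * u + 1) + 1 := by ring
    rw [h2, wordProd_myWord_cons, wordProd_myWord_cons, ih, pow_succ']
    group

lemma wordProd_myWord_odd (a b : B) (u : ℕ) :
    cs.wordProd (myWord a b (2 * u + 1)) =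
      (cs.simple a * cs.simple b) ^ u * cs.simple a := by
  rw [myWord_concat, cs.wordProd_append, wordProd_myWord_even]
  simp [Nat.even_mul]



lemma conj_eq_iff (z x y : W) : (z * x * z⁻¹ = y) ↔ (x = z⁻¹ * y * z) := by
  constructor <;> intro h <;> subst h <;> group

/-! ### The sign representation on `W × ZMod 2` -/

noncomputable def sgnFun (p : B) : W × ZMod 2 → W × ZMod 2 :=
  fun x => (cs.simple p * x.1 * cs.simple p, x.2 + if x.1 = cs.simple p then 1 else 0)

lemma sgnFun_involutive (p : B) : Function.Involutive (sgnFun cs p) := by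
  rintro ⟨t, ε⟩
  simp only [sgnFun]
  have h1 : cs.simple p * (cs.simple p * t * cs.simple p) * cs.simple p = t := by
    simp [mul_assoc, cs.simple_mul_simple_cancel_left, cs.simple_mul_simple_self]
  have h2 : (cs.simple p * t * cs.simple p = cs.simple p) ↔ (t = cs.simple p) := by
    constructor
    · intro h
      have := congrArg (fun x => cs.simple p * x * cs.simple p) h
      rw [h1] at this
      rw [this]
      simp [mul_assoc, cs.simple_mul_simple_self]
    · intro h; rw [h, cs.simple_mul_simple_self p, one_mul]
  refine Prod.ext h1 ?_
  simp only [h2]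
  rcases eq_or_ne t (cs.simple p) with h | h
  · simp only [h, if_pos rfl, add_assoc]
    norm_num
    exact (by decide : (1 : ZMod 2) + 1 = 0)
  · simp [h]

noncomputable def sgnPerm (p : B) : Equiv.Perm (W × ZMod 2) := (sgnFun_involutive cs p).toPerm

lemma sgnPerm_apply (p : B) (t : W) (ε : ZMod 2) :
    sgnPerm cs p (t, ε) =
      (cs.simple p * t * cs.simple p, ε + if t = cs.simple p then 1 else 0) := rfl

lemma sgnPerm_mul_pow_apply (p q : B) (L : ℕ) (t : W) (ε : ZMod 2) :
    ((sgnPerm cs p * sgnPerm cs q) ^ L) (t, ε) =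
      ((cs.simple p * cs.simple q) ^ L * t * ((cs.simple p * cs.simple q) ^ L)⁻¹,
        ε + ∑ j ∈ Finset.range (2 * L),
          if t = cs.simple q * (cs.simple p * cs.simple q) ^ j then 1 else 0) := by
  induction L generalizing t ε with
  | zero => simp
  | succ L ih =>
    rw [pow_succ, Equiv.Perm.mul_apply, Equiv.Perm.mul_apply, sgnPerm_apply, sgnPerm_apply, ih]
    obtain ⟨z, hz⟩ : ∃ z : W, z = cs.simple p * cs.simple q := ⟨_, rfl⟩
    rw [← hz]
    have hzq : z⁻¹ * cs.simple q = cs.simple q * z := by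
      rw [hz, mul_inv_rev, cs.inv_simple, cs.inv_simple, mul_assoc]
    have hzt : ∀ u : W, cs.simple p * (cs.simple q * u * cs.simple q) * cs.simple p
        = z * u * z⁻¹ := by
      intro u
      rw [hz, mul_inv_rev, cs.inv_simple, cs.inv_simple]
      group
    have hz2 : ∀ j : ℕ, z⁻¹ * (cs.simple q * z ^ j) * z = cs.simple q * z ^ (j + 2) := by
      intro j
      calc z⁻¹ * (cs.simple q * z ^ j) * z = (z⁻¹ * cs.simple q) * (z ^ j * z) := by group
        _ = (cs.simple q * z) * (z ^ j * z) := by rw [hzq]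
        _ = cs.simple q * (z * z ^ (j + 1)) := by rw [← pow_succ, mul_assoc]
        _ = cs.simple q * z ^ (j + 2) := by rw [← pow_succ']
    have hconj : z ^ L * (cs.simple p * (cs.simple q * t * cs.simple q) * cs.simple p) *
        (z ^ L)⁻¹ = z ^ (L + 1) * t * (z ^ (L + 1))⁻¹ := by
      rw [hzt]
      group
    refine Prod.ext hconj ?_
    simp only
    have hcond : ∀ j : ℕ,
        (cs.simple p * (cs.simple q * t * cs.simple q) * cs.simple p = cs.simple q * z ^ j)
          ↔ (t = cs.simple q * z ^ (j + 2)) := by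
      intro j
      rw [hzt, conj_eq_iff, hz2]
    have hcond1 : (cs.simple q * t * cs.simple q = cs.simple p)
        ↔ (t = cs.simple q * z ^ 1) := by
      have hq : cs.simple q * t * cs.simple q = cs.simple q * t * (cs.simple q)⁻¹ := by
        rw [cs.inv_simple]
      rw [hq, conj_eq_iff, cs.inv_simple, pow_one, hz, ← mul_assoc]
    have hsum : (∑ j ∈ Finset.range (2 * L),
          if cs.simple p * (cs.simple q * t * cs.simple q) * cs.simple p
            = cs.simple q * z ^ j then (1 : ZMod 2) else 0)
        = ∑ j ∈ Finset.range (2 * L), if t = cs.simple q * z ^ (j + 2) then 1 else 0 := by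
      refine Finset.sum_congr rfl fun j _ => ?_
      rw [if_congr (hcond j) rfl rfl]
    rw [hsum, if_congr hcond1 rfl rfl]
    have h2L : 2 * (L + 1) = (2 * L + 1) + 1 := by ring
    rw [h2L, Finset.sum_range_succ', Finset.sum_range_succ']
    have e0 : cs.simple q * z ^ 0 = cs.simple q := by rw [pow_zero, mul_one]
    simp only [e0]
    have e1 : ∀ j : ℕ, j + 1 + 1 = j + 2 := fun j => rfl
    simp only [e1]
    ring

lemma sgn_liftable : M.IsLiftable (sgnPerm cs) := by
  intro p q
  apply Equiv.ext
  rintro ⟨t, ε⟩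
  have hrel : (cs.simple p * cs.simple q) ^ M p q = 1 := cs.simple_mul_simple_pow p q
  rw [sgnPerm_mul_pow_apply, hrel]
  have hsum : (∑ j ∈ Finset.range (2 * M p q),
      if t = cs.simple q * (cs.simple p * cs.simple q) ^ j then (1 : ZMod 2) else 0) = 0 := by
    rw [two_mul, Finset.sum_range_add]
    have hp : ∀ j : ℕ, (cs.simple p * cs.simple q) ^ (M p q + j)
        = (cs.simple p * cs.simple q) ^ j := by
      intro j; rw [pow_add, hrel, one_mul]
    simp only [hp]
    exact CharTwo.add_self_eq_zero _
  rw [hsum]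
  simp


/-- The sign representation of the Coxeter group. -/
noncomputable def sgnHom : W →* Equiv.Perm (W × ZMod 2) :=
  cs.lift ⟨fun p => sgnPerm cs p, sgn_liftable cs⟩

lemma sgnHom_simple (p : B) (t : W) (ε : ZMod 2) :
    sgnHom cs (cs.simple p) (t, ε) =
      (cs.simple p * t * cs.simple p, ε + if t = cs.simple p then 1 else 0) := by
  have h : sgnHom cs (cs.simple p) = sgnPerm cs p :=
    cs.lift_apply_simple (sgn_liftable cs) p
  rw [h, sgnPerm_apply]




/-- mod-2 count of occurrences in the left inversion sequence. -/
noncomputable def cnt : List B → W → ZMod 2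
  | [], _ => 0
  | p :: ω, t => cnt ω t +
      if cs.wordProd ω * t * (cs.wordProd ω)⁻¹ = cs.simple p then 1 else 0

lemma cnt_cons (p : B) (ω : List B) (t : W) :
    cnt cs (p :: ω) t = cnt cs ω t +
      if cs.wordProd ω * t * (cs.wordProd ω)⁻¹ = cs.simple p then 1 else 0 := rfl

lemma sgnHom_wordProd (ω : List B) (t : W) (ε : ZMod 2) :
    sgnHom cs (cs.wordProd ω) (t, ε) =
      (cs.wordProd ω * t * (cs.wordProd ω)⁻¹, ε + cnt cs ω t) := by
  induction ω generalizing t ε with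
  | nil => simp [cnt]
  | cons p ω ih =>
    rw [cs.wordProd_cons, map_mul, Equiv.Perm.mul_apply, ih, sgnHom_simple]
    refine Prod.ext ?_ ?_
    · simp only [mul_inv_rev, cs.inv_simple]
      group
    · simp only [cnt_cons]
      ring

lemma cnt_invariant {ω₁ ω₂ : List B} (h : cs.wordProd ω₁ = cs.wordProd ω₂) (t : W) :
    cnt cs ω₁ t = cnt cs ω₂ t := by
  have h1 := sgnHom_wordProd cs ω₁ t 0
  have h2 := sgnHom_wordProd cs ω₂ t 0
  rw [h] at h1
  rw [h1] at h2
  have := congrArg Prod.snd h2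
  simpa using this

lemma cnt_mem {ω : List B} {t : W} (h : cnt cs ω t ≠ 0) :
    cs.wordProd ω * t * (cs.wordProd ω)⁻¹ ∈ cs.leftInvSeq ω := by
  induction ω generalizing t with
  | nil => simp [cnt] at h
  | cons p ω ih =>
    have hlis : cs.leftInvSeq (p :: ω) =
        cs.simple p :: List.map (MulAut.conj (cs.simple p)) (cs.leftInvSeq ω) := rfl
    rw [hlis]
    by_cases hc : cs.wordProd ω * t * (cs.wordProd ω)⁻¹ = cs.simple p
    · refine List.mem_cons.2 (Or.inl ?_)
      rw [cs.wordProd_cons, mul_inv_rev, cs.inv_simple]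
      calc cs.simple p * cs.wordProd ω * t * ((cs.wordProd ω)⁻¹ * cs.simple p)
          = cs.simple p * (cs.wordProd ω * t * (cs.wordProd ω)⁻¹) * cs.simple p := by group
        _ = cs.simple p := by rw [hc, cs.simple_mul_simple_self p, one_mul]
    · rw [cnt_cons, if_neg hc, add_zero] at h
      refine List.mem_cons.2 (Or.inr ?_)
      refine List.mem_map.2 ⟨cs.wordProd ω * t * (cs.wordProd ω)⁻¹, ih h, ?_⟩
      rw [MulAut.conj_apply, cs.wordProd_cons, mul_inv_rev, cs.inv_simple]
      group

lemma simple_mem_leftInvSeq_of_descent (y : B) (ω : List B)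
    (h : cs.length (cs.simple y * cs.wordProd ω) < cs.length (cs.wordProd ω)) :
    cs.simple y ∈ cs.leftInvSeq ω := by
  obtain ⟨ω', hred, heq⟩ := cs.exists_reduced_word' (cs.simple y * cs.wordProd ω)
  set v := cs.wordProd ω with hv
  set t₀ : W := v⁻¹ * cs.simple y * v with ht₀
  have hyω' : cs.wordProd (y :: ω') = v := by
    rw [cs.wordProd_cons, ← heq, ← mul_assoc, cs.simple_mul_simple_self, one_mul]
  have hc1 : cs.wordProd ω' * t₀ * (cs.wordProd ω')⁻¹ = cs.simple y := by
    rw [← heq, ht₀]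
    simp [mul_assoc, mul_inv_rev, cs.inv_simple, cs.simple_mul_simple_cancel_left]
  have hc0 : cnt cs ω' t₀ = 0 := by
    by_contra hne
    have hmem := cnt_mem cs hne
    rw [hc1] at hmem
    have hinv := cs.isLeftInversion_of_mem_leftInvSeq hred hmem
    rw [← heq] at hinv
    have := hinv.2
    rw [← mul_assoc, cs.simple_mul_simple_self, one_mul] at this
    omega
  have hcnt : cnt cs ω t₀ = 1 := by
    rw [cnt_invariant cs (hyω'.symm) t₀, cnt_cons, hc0, hc1, if_pos rfl, zero_add]
  have hne : cnt cs ω t₀ ≠ 0 := by rw [hcnt]; decide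
  have hmem := cnt_mem cs hne
  have : v * t₀ * v⁻¹ = cs.simple y := by
    rw [ht₀]
    simp [mul_assoc]
  rw [← hv, this] at hmem
  exact hmem

/-! ### The left inversion sequence of an alternating word -/

lemma leftInvSeq_myWord (a b : B) (r : ℕ) :
    cs.leftInvSeq (myWord a b r) =
      (List.range r).map (fun j => cs.wordProd (myWord a b (2 * j + 1))) := by
  induction r generalizing a b with
  | zero => simp [myWord]
  | succ r ih =>
    rw [myWord_cons]
    have hlis : cs.leftInvSeq (a :: myWord b a r) =
        cs.simple a :: List.map (MulAut.conj (cs.simple a)) (cs.leftInvSeq (myWord b a r)) := rfl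
    rw [hlis, ih, List.range_succ_eq_map, List.map_cons, List.map_map, List.map_map]
    congr 1
    · rw [show (2 : ℕ) * 0 + 1 = 1 from rfl]
      rw [show myWord a b 1 = [a] from rfl]
      simp [cs.wordProd_cons]
    · apply List.map_congr_left
      intro j _
      simp only [Function.comp_apply, MulAut.conj_apply]
      have h1 : cs.simple a * cs.wordProd (myWord b a (2 * j + 1)) * (cs.simple a)⁻¹
          = cs.wordProd (myWord a b (2 * j + 2)) * (cs.simple a)⁻¹ := by
        rw [← cs.wordProd_cons, ← myWord_cons]
      rw [h1, cs.inv_simple]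
      have h2 : myWord a b (2 * j + 2 + 1) = myWord a b (2 * j + 2) ++ [a] := by
        rw [myWord_concat]
        congr 1
        simp [Nat.even_add, Nat.even_mul]
      have h3 : 2 * (j + 1) + 1 = 2 * j + 2 + 1 := by ring
      rw [h3, h2, cs.wordProd_append, cs.wordProd_singleton]

/-! ### Reducedness of alternating words up to the order -/

lemma isReduced_myWord (a b : B) (r : ℕ)
    (hr : r ≤ orderOf (cs.simple a * cs.simple b)) :
    cs.IsReduced (myWord a b r) := by
  induction r generalizing a b with
  | zero => simp [CoxeterSystem.IsReduced, myWord]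
  | succ r ih =>
    have horder : orderOf (cs.simple b * cs.simple a) = orderOf (cs.simple a * cs.simple b) := by
      have : (cs.simple a * cs.simple b)⁻¹ = cs.simple b * cs.simple a := by
        rw [mul_inv_rev, cs.inv_simple, cs.inv_simple]
      rw [← this, orderOf_inv]
    have hred : cs.IsReduced (myWord b a r) := by
      apply ih
      rw [horder]
      omega
    have hlen : cs.length (cs.wordProd (myWord b a r)) = r := by
      have := hred
      unfold CoxeterSystem.IsReduced at this
      simpa [myWord] using this
    rw [myWord_cons]
    unfold CoxeterSystem.IsReduced
    have hll : (a :: myWord b a r).length = r + 1 := by simp [myWord]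
    rw [hll, cs.wordProd_cons]
    rcases cs.length_simple_mul (cs.wordProd (myWord b a r)) a with hcase | hcase
    · rw [hcase, hlen]
    · exfalso
      have hdesc : cs.length (cs.simple a * cs.wordProd (myWord b a r))
          < cs.length (cs.wordProd (myWord b a r)) := by omega
      have hmem := simple_mem_leftInvSeq_of_descent cs a (myWord b a r) hdesc
      rw [leftInvSeq_myWord] at hmem
      obtain ⟨j, hj, hja⟩ := List.mem_map.1 hmem
      rw [List.mem_range] at hj
      rw [wordProd_myWord_odd] at hja
      -- s_a = (s_b s_a)^j * s_b  ⟹  (s_b s_a)^(j+1) = 1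
      have h' : (cs.simple b * cs.simple a) ^ j * cs.simple b = cs.simple a := hja
      have hpow : (cs.simple b * cs.simple a) ^ (j + 1) = 1 := by
        calc (cs.simple b * cs.simple a) ^ (j + 1)
            = ((cs.simple b * cs.simple a) ^ j * cs.simple b) * cs.simple a := by
              rw [pow_succ]; group
          _ = cs.simple a * cs.simple a := by rw [h']
          _ = 1 := cs.simple_mul_simple_self a
      have hdvd := orderOf_dvd_of_pow_eq_one hpow
      have hle := Nat.le_of_dvd (by omega) hdvd
      rw [horder] at hle
      omega

lemma wordProd_myWord_orderOf (a b : B) :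
    cs.wordProd (myWord a b (orderOf (cs.simple a * cs.simple b))) =
      cs.wordProd (myWord b a (orderOf (cs.simple a * cs.simple b))) := by
  set n := orderOf (cs.simple a * cs.simple b) with hn
  have hrel : (cs.simple a * cs.simple b) ^ n = 1 := pow_orderOf_eq_one _
  have hinv : (cs.simple a * cs.simple b)⁻¹ = cs.simple b * cs.simple a := by
    rw [mul_inv_rev, cs.inv_simple, cs.inv_simple]
  have hrel' : (cs.simple b * cs.simple a) ^ n = 1 := by
    rw [← hinv, inv_pow, hrel, inv_one]
  rcases Nat.even_or_odd n with he | ho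
  · obtain ⟨u, hu⟩ := he
    have h2u : n = 2 * u := by omega
    rw [h2u, wordProd_myWord_even, wordProd_myWord_even]
    have h1 : (cs.simple a * cs.simple b) ^ u * (cs.simple a * cs.simple b) ^ u = 1 := by
      rw [← pow_add, ← hu]
      exact hrel
    have h2 : (cs.simple b * cs.simple a) ^ u = ((cs.simple a * cs.simple b) ^ u)⁻¹ := by
      rw [← hinv, inv_pow]
    rw [h2]
    exact eq_inv_of_mul_eq_one_left h1
  · obtain ⟨u, hu⟩ := ho
    rw [hu, wordProd_myWord_odd, wordProd_myWord_odd]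
    -- (s_a s_b)^u * s_a = (s_b s_a)^u * s_b, given (s_a s_b)^(2u+1) = 1
    have hz : (cs.simple b * cs.simple a) ^ u = ((cs.simple a * cs.simple b) ^ u)⁻¹ := by
      rw [← hinv, inv_pow]
    rw [hz]
    have key : (cs.simple a * cs.simple b) ^ u * ((cs.simple a * cs.simple b) ^ u) *
        (cs.simple a * cs.simple b) = 1 := by
      rw [← pow_add, ← pow_succ]
      rw [show u + u + 1 = 2 * u + 1 by ring, ← hu]
      exact hrel
    -- from key: (s_a s_b)^u * s_a = (s_a s_b)^(-u) * s_b
    have : (cs.simple a * cs.simple b) ^ u * (cs.simple a * cs.simple b) ^ u * cs.simple a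
        = cs.simple b := by
      calc (cs.simple a * cs.simple b) ^ u * (cs.simple a * cs.simple b) ^ u * cs.simple a
          = (cs.simple a * cs.simple b) ^ u * (cs.simple a * cs.simple b) ^ u *
            (cs.simple a * cs.simple b) * (cs.simple b)⁻¹ := by
            group
        _ = 1 * (cs.simple b)⁻¹ := by rw [key]
        _ = cs.simple b := by rw [one_mul, cs.inv_simple]
    calc (cs.simple a * cs.simple b) ^ u * cs.simple a
        = ((cs.simple a * cs.simple b) ^ u)⁻¹ *
          ((cs.simple a * cs.simple b) ^ u * (cs.simple a * cs.simple b) ^ u * cs.simple a) := by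
          group
      _ = ((cs.simple a * cs.simple b) ^ u)⁻¹ * cs.simple b := by rw [this]


variable (δ : C → C → W)

section Building

variable
  (W1 : ∀ c d : C, δ c d = 1 ↔ c = d)
  (W2 : ∀ (c d e : C) (i : B), δ d e = cs.simple i →
    ((δ c e = δ c d * cs.simple i ∨ δ c e = δ c d) ∧
      (cs.length (δ c d * cs.simple i) = cs.length (δ c d) + 1 →
        δ c e = δ c d * cs.simple i)))
  (W3 : ∀ (c d : C) (i : B), ∃ e : C, δ d e = cs.simple i ∧
    δ c e = δ c d * cs.simple i)
  (hsym : ∀ c d : C, δ d c = (δ c d)⁻¹)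


include W1 in
lemma delta_self (c : C) : δ c c = 1 := (W1 c c).2 rfl

include W1 W3 in
lemma exists_delta (c : C) (w : W) : ∃ d : C, δ c d = w := by
  obtain ⟨ω, rfl⟩ := cs.wordProd_surjective w
  induction ω using List.reverseRecOn with
  | nil => exact ⟨c, by rw [cs.wordProd_nil]; exact delta_self δ W1 c⟩
  | append_singleton ω r ih =>
    obtain ⟨d, hd⟩ := ih
    obtain ⟨e, _, he⟩ := W3 c d r
    exact ⟨e, by rw [he, hd, cs.wordProd_append, cs.wordProd_singleton]⟩

include W1 W2 W3 hsym in
lemma delta_forced : ∀ (l : List B) (c d e : C), δ d e = cs.wordProd l →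
    cs.length (δ c d * cs.wordProd l) = cs.length (δ c d) + l.length →
    δ c e = δ c d * cs.wordProd l := by
  intro l
  induction l with
  | nil =>
    intro c d e hde _
    rw [cs.wordProd_nil] at hde ⊢
    rw [mul_one, (W1 d e).1 hde]
  | cons r l ih =>
    intro c d e hde hlen
    rw [cs.wordProd_cons] at hde
    obtain ⟨d', hd'1, hd'2⟩ := W3 e d r
    have hd'e : δ d' e = cs.wordProd l := by
      have h1 : δ d' e = (δ e d')⁻¹ := hsym e d'
      rw [h1, hd'2, mul_inv_rev, cs.inv_simple]
      have h2 : (δ e d)⁻¹ = δ d e := by rw [hsym d e, inv_inv]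
      rw [h2, hde, cs.simple_mul_simple_cancel_left]
    have hlen1 : cs.length (δ c d * cs.simple r) = cs.length (δ c d) + 1 := by
      have hub : cs.length (δ c d * cs.simple r) ≤ cs.length (δ c d) + 1 := by
        have := cs.length_mul_le (δ c d) (cs.simple r)
        rwa [cs.length_simple] at this
      have heq : δ c d * cs.wordProd (r :: l) = (δ c d * cs.simple r) * cs.wordProd l := by
        rw [cs.wordProd_cons, mul_assoc]
      have hlb : cs.length (δ c d * cs.wordProd (r :: l)) ≤
          cs.length (δ c d * cs.simple r) + l.length := by
        rw [heq]
        calc cs.length ((δ c d * cs.simple r) * cs.wordProd l)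
            ≤ cs.length (δ c d * cs.simple r) + cs.length (cs.wordProd l) :=
              cs.length_mul_le _ _
          _ ≤ cs.length (δ c d * cs.simple r) + l.length := by
              have := cs.length_wordProd_le l
              omega
      rw [hlen] at hlb
      simp only [List.length_cons] at hlb ⊢
      omega
    have hforce : δ c d' = δ c d * cs.simple r := (W2 c d d' r hd'1).2 hlen1
    have hlen2 : cs.length (δ c d' * cs.wordProd l) = cs.length (δ c d') + l.length := by
      rw [hforce, mul_assoc, ← cs.wordProd_cons]
      rw [hlen, hlen1]
      simp only [List.length_cons]
      omega
    have := ih c d' e hd'e hlen2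
    rw [this, hforce, mul_assoc, ← cs.wordProd_cons]

include W1 W2 in
lemma mem_res_trans {t : B} {p q x : C} (h1 : δ p q = 1 ∨ δ p q = cs.simple t)
    (h2 : δ q x = 1 ∨ δ q x = cs.simple t) : δ p x = 1 ∨ δ p x = cs.simple t := by
  rcases h2 with h2 | h2
  · have : q = x := (W1 q x).1 h2
    rwa [← this]
  · rcases (W2 p q x t h2).1 with h3 | h3
    · rcases h1 with h1 | h1
      · right; rw [h3, h1, one_mul]
      · left; rw [h3, h1, cs.simple_mul_simple_self]
    · rwa [h3]

include hsym in
lemma res_symm {t : B} {p q : C} (h : δ p q = 1 ∨ δ p q = cs.simple t) :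
    δ q p = 1 ∨ δ q p = cs.simple t := by
  rw [hsym p q]
  rcases h with h | h
  · left; rw [h, inv_one]
  · right; rw [h, cs.inv_simple]

include W1 W2 in
lemma unique_gate {w : W} {j : B} (hlen : cs.length (w * cs.simple j) = cs.length w + 1)
    {x y y' : C} (hy : δ x y = w) (hy' : δ x y' = w)
    (hyy' : δ y y' = 1 ∨ δ y y' = cs.simple j) : y = y' := by
  rcases hyy' with h | h
  · exact (W1 y y').1 h
  · exfalso
    have hforce : δ x y' = δ x y * cs.simple j := by
      refine (W2 x y y' j h).2 ?_
      rw [hy]; exact hlen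
    rw [hy, hy'] at hforce
    have := congrArg cs.length hforce
    rw [hlen] at this
    omega

include W1 W2 W3 hsym in
lemma gate_exists {i j : B} {w : W} (hcomm : cs.simple i * w = w * cs.simple j)
    {c d : C} (hcd : δ c d = w) :
    ∀ x : C, (δ c x = 1 ∨ δ c x = cs.simple i) →
      ∃ y : C, (δ d y = 1 ∨ δ d y = cs.simple j) ∧ δ x y = w := by
  intro x hx
  have hxd : δ x d = w ∨ δ x d = w * cs.simple j := by
    rcases hx with h1 | h1
    · have : c = x := (W1 c x).1 h1
      rw [← this, hcd]
      exact Or.inl rfl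
    · rcases (W2 d c x i h1).1 with h3 | h3
      · right
        rw [hsym d x, h3, hsym c d, hcd, mul_inv_rev, cs.inv_simple, inv_inv, hcomm]
      · left
        rw [hsym d x, h3, hsym c d, hcd, inv_inv]
  rcases hxd with h | h
  · exact ⟨d, Or.inl (delta_self δ W1 d), h⟩
  · obtain ⟨y, hy1, hy2⟩ := W3 x d j
    refine ⟨y, Or.inr hy1, ?_⟩
    rw [hy2, h, cs.simple_mul_simple_cancel_right]


include W1 W2 hsym in
lemma gate_unique {j : B} {w : W} (hlen : cs.length (w * cs.simple j) = cs.length w + 1)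
    {d x y y' : C}
    (hy : (δ d y = 1 ∨ δ d y = cs.simple j) ∧ δ x y = w)
    (hy' : (δ d y' = 1 ∨ δ d y' = cs.simple j) ∧ δ x y' = w) : y = y' := by
  have hyy' : δ y y' = 1 ∨ δ y y' = cs.simple j :=
    mem_res_trans cs δ W1 W2 (res_symm cs δ hsym hy.1) hy'.1
  exact unique_gate cs δ W1 W2 hlen hy.2 hy'.2 hyy'

include W1 W2 W3 hsym in
lemma parallel_panels {i j : B} {w : W} (hcomm : cs.simple i * w = w * cs.simple j)
    (hlen : cs.length (w * cs.simple j) = cs.length w + 1)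
    {c d : C} (hcd : δ c d = w) :
    Nonempty ({e : C // δ c e = 1 ∨ δ c e = cs.simple i} ≃
      {e : C // δ d e = 1 ∨ δ d e = cs.simple j}) := by
  have hcomm' : cs.simple j * w⁻¹ = w⁻¹ * cs.simple i := by
    have h := congrArg (fun u => u⁻¹) hcomm
    simp only [mul_inv_rev, cs.inv_simple] at h
    exact h.symm
  have hlen' : cs.length (w⁻¹ * cs.simple i) = cs.length w⁻¹ + 1 := by
    have h1 : w⁻¹ * cs.simple i = (cs.simple i * w)⁻¹ := by
      rw [mul_inv_rev, cs.inv_simple]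
    rw [h1, cs.length_inv, hcomm, hlen, cs.length_inv]
  have hdc : δ d c = w⁻¹ := by rw [hsym c d, hcd]
  have ex1 := gate_exists cs δ W1 W2 W3 hsym hcomm hcd
  have ex2 := gate_exists cs δ W1 W2 W3 hsym hcomm' hdc
  choose f hf1 hf2 using ex1
  choose g hg1 hg2 using ex2
  refine ⟨⟨fun x => ⟨f x.1 x.2, hf1 x.1 x.2⟩, fun y => ⟨g y.1 y.2, hg1 y.1 y.2⟩, ?_, ?_⟩⟩
  · rintro ⟨x, hx⟩
    apply Subtype.ext
    simp only
    refine gate_unique cs δ W1 W2 hsym hlen' ⟨hg1 _ _, hg2 _ _⟩ ⟨hx, ?_⟩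
    rw [hsym x (f x hx), hf2 x hx]
  · rintro ⟨y, hy⟩
    apply Subtype.ext
    simp only
    refine gate_unique cs δ W1 W2 hsym hlen ⟨hf1 _ _, hf2 _ _⟩ ⟨hy, ?_⟩
    rw [hsym y (g y hy), hg2 y hy, inv_inv]

include W1 W2 hsym in
noncomputable def res_equiv {t : B} {p q : C} (h : δ p q = 1 ∨ δ p q = cs.simple t) :
    {x : C // δ p x = 1 ∨ δ p x = cs.simple t} ≃
      {x : C // δ q x = 1 ∨ δ q x = cs.simple t} :=
  Equiv.subtypeEquivRight (fun x =>
    ⟨fun hx => mem_res_trans cs δ W1 W2 (res_symm cs δ hsym h) hx,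
     fun hx => mem_res_trans cs δ W1 W2 h hx⟩)

include W1 W2 W3 hsym in
lemma adjacent_equiv (hfin : ∀ i j : B, M i j ≠ 0)
    (hthick : ∀ (c : C) (i : B), ∃ d e : C, d ≠ e ∧ d ≠ c ∧ e ≠ c ∧
      δ c d = cs.simple i ∧ δ c e = cs.simple i)
    (i k : B) {d e : C} (hde : δ d e = cs.simple k) :
    Nonempty ({x : C // δ d x = 1 ∨ δ d x = cs.simple i} ≃
      {x : C // δ e x = 1 ∨ δ e x = cs.simple i}) := by
  by_cases hsk : cs.simple k = cs.simple i
  · exact ⟨res_equiv cs δ W1 W2 hsym (Or.inr (by rw [hde, hsk]))⟩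
  · set n := orderOf (cs.simple i * cs.simple k) with hn
    have hz1 : (cs.simple i * cs.simple k) ^ M i k = 1 := cs.simple_mul_simple_pow i k
    have hnpos : 0 < n := by
      rcases Nat.eq_zero_or_pos n with h0 | h
      · exfalso
        have hdvd := orderOf_dvd_of_pow_eq_one hz1
        rw [hn] at h0
        rw [h0] at hdvd
        exact hfin i k (Nat.eq_zero_of_zero_dvd hdvd)
      · exact h
    have horder : orderOf (cs.simple k * cs.simple i) = n := by
      rw [hn]
      have hinv : (cs.simple i * cs.simple k)⁻¹ = cs.simple k * cs.simple i := by
        rw [mul_inv_rev, cs.inv_simple, cs.inv_simple]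
      rw [← hinv, orderOf_inv]
    set w0 := cs.wordProd (myWord i k n) with hw0
    have hw0' : w0 = cs.wordProd (myWord k i n) := by
      rw [hw0, hn]
      exact wordProd_myWord_orderOf cs i k
    have hlw0 : cs.length w0 = n := by
      have hred0 : cs.IsReduced (myWord i k n) := isReduced_myWord cs i k n (by rw [hn])
      unfold CoxeterSystem.IsReduced at hred0
      rw [hw0, hred0, myWord_length]
    -- a third chamber in the k-panel of d
    obtain ⟨x, y, hxy, hxd, hyd, hx, hy⟩ := hthick d k
    obtain ⟨g, hgd, hge, hgs⟩ : ∃ g : C, g ≠ d ∧ g ≠ e ∧ δ d g = cs.simple k := by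
      by_cases hxe : x = e
      · exact ⟨y, hyd, fun hc => hxy (by rw [hxe, hc]), hy⟩
      · exact ⟨x, hxd, hxe, hx⟩
    have hegs : δ e g = cs.simple k := by
      have hedk : δ e d = cs.simple k := by rw [hsym d e, hde, cs.inv_simple]
      rcases (W2 e d g k hgs).1 with h | h
      · exfalso
        rw [hedk, cs.simple_mul_simple_self] at h
        exact hge ((W1 e g).1 h).symm
      · rw [h, hedk]
    -- a chamber f with δ d f = δ e f = w0
    obtain ⟨f, hgf⟩ := exists_delta cs δ W1 W3 g (cs.wordProd (myWord i k (n - 1)))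
    have hn1 : n - 1 + 1 = n := by omega
    have hcons : (k :: myWord i k (n - 1)) = myWord k i n := by
      rw [← myWord_cons, hn1]
    have hskw : cs.simple k * cs.wordProd (myWord i k (n - 1)) = w0 := by
      rw [← cs.wordProd_cons, hcons, ← hw0']
    have hlen_path : ∀ c' : C, δ c' g = cs.simple k → δ c' f = w0 := by
      intro c' hc'
      have hforced := delta_forced cs δ W1 W2 W3 hsym (myWord i k (n - 1)) c' g f hgf ?_
      · rw [hforced, hc', hskw]
      · rw [hc', hskw, hlw0, cs.length_simple, myWord_length]
        omega
    have hdf : δ d f = w0 := hlen_path d hgs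
    have hef : δ e f = w0 := hlen_path e hegs
    -- the letter t and the word w
    set t : B := if Even (n - 1) then k else i with ht
    have hconcat : myWord k i (n - 1) ++ [t] = myWord k i n := by
      rw [ht, ← myWord_concat, hn1]
    set w := cs.wordProd (myWord k i (n - 1)) with hw
    have hwst : w * cs.simple t = w0 := by
      rw [hw, ← cs.wordProd_singleton, ← cs.wordProd_append, hconcat, ← hw0']
    have hsiw : cs.simple i * w = w0 := by
      have hic : (i :: myWord k i (n - 1)) = myWord i k n := by
        rw [← myWord_cons, hn1]
      rw [hw, ← cs.wordProd_cons, hic, ← hw0]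
    have hlw : cs.length w = n - 1 := by
      have hred : cs.IsReduced (myWord k i (n - 1)) := by
        refine isReduced_myWord cs k i (n - 1) ?_
        rw [horder]
        omega
      unfold CoxeterSystem.IsReduced at hred
      rw [hw, hred, myWord_length]
    have hcommA : cs.simple i * w = w * cs.simple t := by rw [hsiw, hwst]
    have hlenA : cs.length (w * cs.simple t) = cs.length w + 1 := by
      rw [hwst, hlw0, hlw]
      omega
    have hw0t : w0 * cs.simple t = w := by
      rw [← hwst, cs.simple_mul_simple_cancel_right]
    obtain ⟨yd, hyd1, hyd2⟩ := W3 d f t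
    obtain ⟨ye, hye1, hye2⟩ := W3 e f t
    have hdyd : δ d yd = w := by rw [hyd2, hdf, hw0t]
    have heye : δ e ye = w := by rw [hye2, hef, hw0t]
    obtain ⟨E1⟩ := parallel_panels cs δ W1 W2 W3 hsym hcommA hlenA hdyd
    obtain ⟨E2⟩ := parallel_panels cs δ W1 W2 W3 hsym hcommA hlenA heye
    have hydye : δ yd ye = 1 ∨ δ yd ye = cs.simple t :=
      mem_res_trans cs δ W1 W2 (res_symm cs δ hsym (Or.inr hyd1)) (Or.inr hye1)
    exact ⟨E1.trans ((res_equiv cs δ W1 W2 hsym hydye).trans E2.symm)⟩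

end Building

end Statement16

/-- Let `X` be a thick building of irreducible type `W` whose Coxeter
generators satisfy that every product `s_i s_j` has finite order.  Then `X` is regular:
for any two panels of the same cotype, the set of chambers containing the one is in
bijection with the set of chambers containing the other.

The building is axiomatized via its `W`-metric `δ : C → C → W` on the set `C` of
chambers (axioms (W1)–(W3)); the chambers containing the cotype-`i` panel of a chamber
`c` form the `i`-residue `{e | δ c e = 1 ∨ δ c e = sᵢ}` of `c`, and thickness says each
such residue has at least three elements. -/
theorem thick_building_regular {B W C : Type*} [Group W]
    (M : CoxeterMatrix B) (cs : CoxeterSystem M W)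
    (hfin : ∀ i j : B, M i j ≠ 0)
    (hirr : ∀ A : Set B, (∀ i ∈ A, ∀ j ∉ A, M i j = 2) → A = ∅ ∨ A = Set.univ)
    (δ : C → C → W)
    (W1 : ∀ c d : C, δ c d = 1 ↔ c = d)
    (W2 : ∀ (c d e : C) (i : B), δ d e = cs.simple i →
      ((δ c e = δ c d * cs.simple i ∨ δ c e = δ c d) ∧
        (cs.length (δ c d * cs.simple i) = cs.length (δ c d) + 1 →
          δ c e = δ c d * cs.simple i)))
    (W3 : ∀ (c d : C) (i : B), ∃ e : C, δ d e = cs.simple i ∧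
      δ c e = δ c d * cs.simple i)
    (hsym : ∀ c d : C, δ d c = (δ c d)⁻¹)
    (hthick : ∀ (c : C) (i : B), ∃ d e : C, d ≠ e ∧ d ≠ c ∧ e ≠ c ∧
      δ c d = cs.simple i ∧ δ c e = cs.simple i)
    (i : B) (c d : C) :
    Nonempty ({e : C // δ c e = 1 ∨ δ c e = cs.simple i} ≃
      {e : C // δ d e = 1 ∨ δ d e = cs.simple i}) := by
  suffices h : ∀ (N : ℕ) (c d : C), cs.length (δ c d) ≤ N →
      Nonempty ({e : C // δ c e = 1 ∨ δ c e = cs.simple i} ≃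
        {e : C // δ d e = 1 ∨ δ d e = cs.simple i}) from
    h (cs.length (δ c d)) c d le_rfl
  intro N
  induction N with
  | zero =>
    intro c d hN
    have h1 : δ c d = 1 := cs.length_eq_zero_iff.1 (Nat.le_zero.1 hN)
    rw [(W1 c d).1 h1]
    exact ⟨Equiv.refl _⟩
  | succ N ih =>
    intro c d hN
    by_cases h1 : δ c d = 1
    · rw [(W1 c d).1 h1]
      exact ⟨Equiv.refl _⟩
    · obtain ⟨k, hk⟩ := cs.exists_rightDescent_of_ne_one h1
      obtain ⟨e, he1, he2⟩ := W3 c d k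
      have hk' : cs.length (δ c d * cs.simple k) < cs.length (δ c d) := hk
      have hle : cs.length (δ c e) ≤ N := by
        rw [he2]; omega
      obtain ⟨E1⟩ := ih c e hle
      have hed : δ e d = cs.simple k := by rw [hsym d e, he1, cs.inv_simple]
      obtain ⟨E2⟩ := Statement16.adjacent_equiv cs δ W1 W2 W3 hsym hfin hthick i k hed
      exact ⟨E1.trans E2⟩
end
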